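/- arXiv:2307.08787 — 3 statements merged into one kernel-verified Lean document; each statement's English description precedes it below -/
import Mathlib

section
/- Let p be a prime and let G be a finitely generated pro-p group with a ℤ_p-splitting G = A ⨿_C B (respectively G = HNN(A, C, t)). Suppose A splits as a nontrivial free pro-p product A = A₁ ⨿ A₂ such that some A-conjugate of C is contained in A₁ or in A₂ (and, in the HNN case, also some A-conjugate of t⁻¹Ct is contained in A₁ or in A₂). Then G splits as a nontrivial free pro-p product. (This is the algebraic form—via the equivalence, for finitely generated pro-p groups, between nontrivial free pro-p decompositions and actions on infinite pro-p trees with trivial edge stabilizers—of the statement: if A admits an action on an infinite pro-p tree with trivial edge stabilizers in which C is elliptic, then so does G.) -/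
open Subgroup

universe u

/-- A pro-`p` group: compact, Hausdorff, totally disconnected topological group in which
every open normal subgroup has index a power of `p`. -/
def IsProP (p : ℕ) (G : Type u) [Group G] [TopologicalSpace G] : Prop :=
  CompactSpace G ∧ T2Space G ∧ TotallyDisconnectedSpace G ∧
    ∀ U : Subgroup G, U.Normal → IsOpen (U : Set G) → ∃ n : ℕ, U.index = p ^ n

/-- Topologically isomorphic to the (additive) group `ℤ_p` of `p`-adic integers. -/
def IsTopIsoZp (p : ℕ) [Fact p.Prime] (H : Type*) [Group H] [TopologicalSpace H] : Prop :=
  ∃ e : H ≃* Multiplicative ℤ_[p], Continuous e ∧ Continuous e.symm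

/-- Topologically isomorphic to `ℤ_p × ℤ_p`. -/
def IsTopIsoZpxZp (p : ℕ) [Fact p.Prime] (H : Type*) [Group H] [TopologicalSpace H] : Prop :=
  ∃ e : H ≃* Multiplicative ℤ_[p] × Multiplicative ℤ_[p], Continuous e ∧ Continuous e.symm

/-- The closed subgroup topologically generated by one element. -/
def topGenBy {G : Type u} [Group G] [TopologicalSpace G] [IsTopologicalGroup G] (x : G) :
    Subgroup G :=
  (Subgroup.closure {x}).topologicalClosure

/-- Topologically finitely generated. -/
def TopFiniteGen (G : Type u) [Group G] [TopologicalSpace G] [IsTopologicalGroup G] : Prop :=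
  ∃ S : Finset G, (Subgroup.closure (S : Set G)).topologicalClosure = ⊤

/-- Topologically procyclic: topologically generated by a single element. -/
def Procyclic (G : Type u) [Group G] [TopologicalSpace G] [IsTopologicalGroup G] : Prop :=
  ∃ x : G, topGenBy x = ⊤

/-- `G` splits as a proper amalgamated free pro-`p` product `G = A ⨿_C B`:
`A`, `B` are closed subgroups with `A ⊓ B = C`, `G` is topologically generated by `A ∪ B`,
and the universal property for pairs of continuous homomorphisms into pro-`p` groups
agreeing on `C` holds. -/
def IsAmalgFreeProdP (p : ℕ) (G : Type u) [Group G] [TopologicalSpace G] [IsTopologicalGroup G]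
    (A B C : Subgroup G) : Prop :=
  IsClosed (A : Set G) ∧ IsClosed (B : Set G) ∧ A ⊓ B = C ∧
    (A ⊔ B).topologicalClosure = ⊤ ∧
    ∀ (K : Type u) [Group K] [TopologicalSpace K] [IsTopologicalGroup K],
      IsProP p K →
      ∀ (ψ₁ : A →* K) (ψ₂ : B →* K), Continuous ψ₁ → Continuous ψ₂ →
        (∀ (x : G) (hA : x ∈ A) (hB : x ∈ B), ψ₁ ⟨x, hA⟩ = ψ₂ ⟨x, hB⟩) →
        ∃! φ : G →* K, Continuous φ ∧ (∀ a : A, φ a = ψ₁ a) ∧ (∀ b : B, φ b = ψ₂ b)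

/-- `G` splits as a proper pro-`p` HNN-extension `G = HNN(A, C, t)`:
`A` is a closed subgroup, `C ≤ A` closed with `t⁻¹Ct ≤ A`, `G` is topologically generated
by `A ∪ {t}`, and the universal property holds. -/
def IsHNNProP (p : ℕ) (G : Type u) [Group G] [TopologicalSpace G] [IsTopologicalGroup G]
    (A C : Subgroup G) (t : G) : Prop :=
  IsClosed (A : Set G) ∧ IsClosed (C : Set G) ∧ C ≤ A ∧ (∀ c ∈ C, t⁻¹ * c * t ∈ A) ∧
    (A ⊔ Subgroup.closure {t}).topologicalClosure = ⊤ ∧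
    ∀ (K : Type u) [Group K] [TopologicalSpace K] [IsTopologicalGroup K],
      IsProP p K →
      ∀ (ψ : A →* K) (k : K), Continuous ψ →
        (∀ (c : G) (hcC : c ∈ C) (hcA : c ∈ A) (hct : t⁻¹ * c * t ∈ A),
          k⁻¹ * ψ ⟨c, hcA⟩ * k = ψ ⟨t⁻¹ * c * t, hct⟩) →
        ∃! ω : G →* K, Continuous ω ∧ (∀ a : A, ω a = ψ a) ∧ ω t = k

/-- `G` does not split as a nontrivial free pro-`p` product (= proper amalgamated
free pro-`p` product over the trivial subgroup with both factors nontrivial). -/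
def FreeIndecomposable (p : ℕ) (G : Type u) [Group G] [TopologicalSpace G]
    [IsTopologicalGroup G] : Prop :=
  ¬ ∃ A B : Subgroup G, IsAmalgFreeProdP p G A B ⊥ ∧ A ≠ ⊥ ∧ B ≠ ⊥

/-- The conjugate subgroup `C^t = t⁻¹ C t`. -/
def conjSub {G : Type u} [Group G] (t : G) (C : Subgroup G) : Subgroup G :=
  C.map (MulAut.conj t⁻¹).toMonoidHom

/-- The data of a splitting of `G`: an amalgamated free product `A ⨿_C B`
or an HNN-extension `HNN(A, C, t)`. -/
inductive SplitData (G : Type u) [Group G] : Type u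
  | amalg : Subgroup G → Subgroup G → Subgroup G → SplitData G
  | hnn : Subgroup G → Subgroup G → G → SplitData G

namespace SplitData

variable {G : Type u} [Group G]

/-- The amalgamated (resp. associated) subgroup of a splitting. -/
def C : SplitData G → Subgroup G
  | amalg _ _ C => C
  | hnn _ C _ => C

/-- `g` is elliptic: some conjugate of `g` lies in `A ∪ B` (resp. in `A`). -/
def Elliptic : SplitData G → G → Prop
  | amalg A B _, g => ∃ h : G, h⁻¹ * g * h ∈ A ∨ h⁻¹ * g * h ∈ B
  | hnn A _ _, g => ∃ h : G, h⁻¹ * g * h ∈ A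

/-- `g` is hyperbolic: not elliptic. -/
def Hyperbolic (S : SplitData G) (g : G) : Prop := ¬ S.Elliptic g

/-- The splitting is an HNN-extension (not an amalgam). -/
def IsHNNCase : SplitData G → Prop
  | amalg _ _ _ => False
  | hnn _ _ _ => True

variable [TopologicalSpace G] [IsTopologicalGroup G]

/-- The data is a genuine `ℤ_p`-splitting of `G`: a proper non-fictitious amalgamated free
pro-`p` product, or a proper pro-`p` HNN-extension, over a subgroup `C ≅ ℤ_p`. -/
def IsZp (p : ℕ) [Fact p.Prime] : SplitData G → Prop
  | amalg A B C => IsAmalgFreeProdP p G A B C ∧ C ≠ A ∧ C ≠ B ∧ IsTopIsoZp p ↥C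
  | hnn A C t => IsHNNProP p G A C t ∧ IsTopIsoZp p ↥C

end SplitData

/-- Two splittings form a hyperbolic-hyperbolic pair: every topological generator of `C₁`
is hyperbolic with respect to the second splitting and vice versa. -/
def HypHypPair {G : Type u} [Group G] [TopologicalSpace G] [IsTopologicalGroup G]
    (S₁ S₂ : SplitData G) : Prop :=
  (∀ c : G, topGenBy c = S₁.C → S₂.Hyperbolic c) ∧
  (∀ c : G, topGenBy c = S₂.C → S₁.Hyperbolic c)

/-- `H` is malnormal in the subgroup `K` (both subgroups of an ambient group). -/
def MalnormalIn {G : Type u} [Group G] (H K : Subgroup G) : Prop :=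
  ∀ k ∈ K, k ∉ H → ∀ x ∈ H, k⁻¹ * x * k ∈ H → x = 1

/-- The malnormality conclusion for a splitting: `C` is malnormal in `A` or `B`
(resp. `C` or `C^t` is malnormal in `A`). -/
def SplitData.MalnormalConcl {G : Type u} [Group G] : SplitData G → Prop
  | .amalg A B C => MalnormalIn C A ∨ MalnormalIn C B
  | .hnn A C t => MalnormalIn C A ∨ MalnormalIn (conjSub t C) A

/-- The 2-acylindricity of the action on the standard pro-`p` tree, spelled out through
edge stabilizers: no nontrivial element fixes three consecutive edges. -/
def SplitData.TwoAcylConcl {G : Type u} [Group G] : SplitData G → Prop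
  | .amalg A B C => ∀ a ∈ A, a ∉ C → ∀ b ∈ B, b ∉ C →
      ∀ g ∈ C, a⁻¹ * g * a ∈ C → b⁻¹ * g * b ∈ C → g = 1
  | .hnn A C t => ∀ x : G, (x ∈ A ∨ x * t ∈ A) → x ∉ C →
      ∀ y : G, (t⁻¹ * y ∈ A ∨ t⁻¹ * y * t ∈ A) → y ∉ C →
      x⁻¹ * y ∉ C →
      ∀ g ∈ C, x⁻¹ * g * x ∈ C → y⁻¹ * g * y ∈ C → g = 1

/-- The pro-2 Klein bottle `ℤ₂ ⋊ ℤ₂` (action by inversion through `ℤ₂/2ℤ₂`), characterized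
internally. -/
def IsProKleinBottle (N : Type*) [Group N] [TopologicalSpace N] [IsTopologicalGroup N] : Prop :=
  ∃ a t : N, t⁻¹ * a * t = a⁻¹ ∧ (topGenBy a).Normal ∧
    IsTopIsoZp 2 ↥(topGenBy a) ∧ IsTopIsoZp 2 ↥(topGenBy t) ∧
    topGenBy a ⊓ topGenBy t = ⊥ ∧ (topGenBy a ⊔ topGenBy t).topologicalClosure = ⊤

/-- The infinite dihedral pro-2 group `ℤ₂ ⋊ ℤ/2ℤ` (with inversion), characterized
internally. -/
def IsInfDihedralPro2 (N : Type*) [Group N] [TopologicalSpace N] [IsTopologicalGroup N] : Prop :=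
  ∃ a s : N, s * s = 1 ∧ s ≠ 1 ∧ s⁻¹ * a * s = a⁻¹ ∧ (topGenBy a).Normal ∧
    IsTopIsoZp 2 ↥(topGenBy a) ∧ s ∉ topGenBy a ∧
    (topGenBy a ⊔ topGenBy s).topologicalClosure = ⊤

/-- `(ℤ₂ × ℤ₂) ⋊ ℤ/2ℤ` with `ℤ/2ℤ` acting by inversion, characterized internally. -/
def IsZ2xZ2ByInversion (N : Type*) [Group N] [TopologicalSpace N] [IsTopologicalGroup N] : Prop :=
  ∃ (M : Subgroup N) (s : N), IsClosed (M : Set N) ∧ M.Normal ∧ IsTopIsoZpxZp 2 ↥M ∧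
    s * s = 1 ∧ s ∉ M ∧ (∀ m ∈ M, s⁻¹ * m * s = m⁻¹) ∧
    (M ⊔ topGenBy s).topologicalClosure = ⊤

/-- A semidirect product `(ℤ₂ ⋊ ℤ₂) ⋊ ℤ/2ℤ` of the pro-2 Klein bottle and a group of
order 2, characterized internally. -/
def IsKleinByC2 (N : Type*) [Group N] [TopologicalSpace N] [IsTopologicalGroup N] : Prop :=
  ∃ (M : Subgroup N) (s : N), IsClosed (M : Set N) ∧ M.Normal ∧ IsProKleinBottle ↥M ∧
    s * s = 1 ∧ s ∉ M ∧ (M ⊔ topGenBy s).topologicalClosure = ⊤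

/-- `G` splits, as a proper non-fictitious amalgamated free pro-`p` product or a proper
pro-`p` HNN-extension, over a subgroup of order at most 2. -/
def SplitsOverSmall (p : ℕ) (G : Type u) [Group G] [TopologicalSpace G]
    [IsTopologicalGroup G] : Prop :=
  ∃ H : Subgroup G, Nat.card H ≤ 2 ∧
    ((∃ G₁ G₂ : Subgroup G, IsAmalgFreeProdP p G G₁ G₂ H ∧ H ≠ G₁ ∧ H ≠ G₂) ∨
     (∃ (A : Subgroup G) (t : G), IsHNNProP p G A H t))

/-- `X` is contained in some conjugate of `Y`. -/
def InConjOf {G : Type u} [Group G] (X Y : Subgroup G) : Prop :=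
  ∃ g : G, ∀ x ∈ X, g * x * g⁻¹ ∈ Y

/-- The base factors of the splitting (both `A` and `B` in the amalgam case, `A` in the
HNN case) are each contained in conjugates of subgroups satisfying `P`. -/
def SplitData.BaseConjInto {G : Type u} [Group G] : SplitData G → (Subgroup G → Prop) → Prop
  | .amalg A B _, P => (∃ Y, P Y ∧ InConjOf A Y) ∧ (∃ Y, P Y ∧ InConjOf B Y)
  | .hnn A _ _, P => ∃ Y, P Y ∧ InConjOf A Y


/-- The subgroup `D = ⟨N_G(C₁) ∪ B₁⟩` appearing in the canonical decomposition
`G = A₁ ⨿_{N_{A₁}(C₁)} D` of an amalgam `G = A₁ ⨿_{C₁} B₁`. -/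
def amalgD {G : Type u} [Group G] [TopologicalSpace G] [IsTopologicalGroup G]
    (B₁ C₁ : Subgroup G) : Subgroup G :=
  (Subgroup.normalizer (C₁ : Set G) ⊔ B₁).topologicalClosure

/-- The subgroup `E = ⟨A₁ ∪ N_G(C₁^{t₁})⟩` appearing in the canonical decomposition
`G = HNN(E, N_{A₁}(C₁), t₁)` of an HNN-extension `G = HNN(A₁, C₁, t₁)`. -/
def hnnE {G : Type u} [Group G] [TopologicalSpace G] [IsTopologicalGroup G]
    (A₁ C₁ : Subgroup G) (t₁ : G) : Subgroup G :=
  (A₁ ⊔ Subgroup.normalizer ((conjSub t₁ C₁ : Subgroup G) : Set G)).topologicalClosure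

set_option linter.unusedSectionVars false
set_option maxHeartbeats 1000000

section Helpers

variable {G : Type*} [Group G] [TopologicalSpace G] [IsTopologicalGroup G]
variable {K : Type*} [Group K] [TopologicalSpace K] [IsTopologicalGroup K]

theorem myEqOfDense [T2Space K] {H : Subgroup G} (hH : H.topologicalClosure = ⊤)
    {f g : G →* K} (hf : Continuous f) (hg : Continuous g)
    (h : ∀ x ∈ H, f x = g x) : f = g := by
  have hle : H ≤ f.eqLocus g := h
  have : H.topologicalClosure ≤ f.eqLocus g :=
    Subgroup.topologicalClosure_minimal H hle (isClosed_eq hf hg)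
  ext x
  exact this (hH ▸ Subgroup.mem_top x)

theorem myDens [T2Space K] (H : Subgroup G)
    (f : G →* K) (ψ : ↥(H.topologicalClosure) →* K)
    (hf : Continuous f) (hψ : Continuous ψ)
    (h : ∀ z : ↥(H.topologicalClosure), (z : G) ∈ H → f z = ψ z) :
    ∀ z : ↥(H.topologicalClosure), f z = ψ z := by
  intro z
  have hcl : z ∈ _root_.closure {y : ↥(H.topologicalClosure) | (y : G) ∈ H} := by
    rw [closure_subtype]
    have himg : (Subtype.val '' {y : ↥(H.topologicalClosure) | (y : G) ∈ H}) = (H : Set G) := by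
      ext x
      constructor
      · rintro ⟨y, hy, rfl⟩; exact hy
      · intro hx
        exact ⟨⟨x, H.le_topologicalClosure hx⟩, hx, rfl⟩
    rw [himg]
    exact z.2
  have hsub : _root_.closure {y : ↥(H.topologicalClosure) | (y : G) ∈ H}
      ⊆ {y : ↥(H.topologicalClosure) | f y = ψ y} := by
    apply closure_minimal
    · intro y hy; exact h y hy
    · exact isClosed_eq (hf.comp continuous_subtype_val) hψ
  exact hsub hcl

/-- Pointwise version of `myDens` stated via the subgroup-membership of the pieces. -/
theorem myDens' [T2Space K] (H : Subgroup G)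
    (f : G →* K) (ψ : ↥(H.topologicalClosure) →* K)
    (hf : Continuous f) (hψ : Continuous ψ)
    (h : ∀ (x : G) (hx : x ∈ H), f x = ψ ⟨x, H.le_topologicalClosure hx⟩) :
    ∀ z : ↥(H.topologicalClosure), f z = ψ z := by
  apply myDens H f ψ hf hψ
  intro z hz
  have := h z hz
  simpa using this

theorem myMapClosed [CompactSpace G] [T2Space G] {A : Subgroup G}
    (hA : IsClosed (A : Set G)) (X : Subgroup ↥A) (hX : IsClosed (X : Set ↥A)) :
    IsClosed ((X.map A.subtype : Subgroup G) : Set G) := by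
  have hAc : IsCompact (A : Set G) := hA.isCompact
  have : CompactSpace ↥A := isCompact_iff_compactSpace.mp hAc
  have hXc : IsCompact (X : Set ↥A) := hX.isCompact
  have h2 : IsCompact (Subtype.val '' (X : Set ↥A)) := hXc.image continuous_subtype_val
  have hEq : ((X.map A.subtype : Subgroup G) : Set G) = Subtype.val '' (X : Set ↥A) := by
    simp [Subgroup.coe_map, Subgroup.coe_subtype]
  rw [hEq]
  exact h2.isClosed

theorem myConjCont (g : G) : Continuous ((MulAut.conj g).toMonoidHom : G →* G) := by
  show Continuous fun x : G => g * x * g⁻¹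
  continuity

theorem myKerClosed [T2Space K] {f : G →* K} (hf : Continuous f) :
    IsClosed (f.ker : Set G) := by
  have : (f.ker : Set G) = {x | f x = 1} := by ext x; simp [MonoidHom.mem_ker]
  rw [this]
  exact isClosed_eq hf continuous_const

end Helpers

section Main

variable {p : ℕ} [Fact p.Prime]

/-- Extract the extension homomorphism from a free pro-p decomposition. -/
theorem getChi {A' : Type u} [Group A'] [TopologicalSpace A'] [IsTopologicalGroup A']
    {A₁ A₂ : Subgroup A'} (hfree : IsAmalgFreeProdP p A' A₁ A₂ ⊥)
    (K : Type u) [Group K] [TopologicalSpace K] [IsTopologicalGroup K] (hK : IsProP p K)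
    (θ₁ : A₁ →* K) (θ₂ : A₂ →* K) (h1 : Continuous θ₁) (h2 : Continuous θ₂) :
    ∃ χ : A' →* K, Continuous χ ∧ (∀ (y : A') (hy : y ∈ A₁), χ y = θ₁ ⟨y, hy⟩) ∧
      (∀ (y : A') (hy : y ∈ A₂), χ y = θ₂ ⟨y, hy⟩) := by
  obtain ⟨-, -, hinf, -, hUP⟩ := hfree
  have hagree : ∀ (x : A') (hA : x ∈ A₁) (hB : x ∈ A₂), θ₁ ⟨x, hA⟩ = θ₂ ⟨x, hB⟩ := by
    intro x hA hB
    have hx1 : x = 1 := by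
      have : x ∈ A₁ ⊓ A₂ := ⟨hA, hB⟩
      rw [hinf] at this
      simpa using this
    subst hx1
    have e1 : (⟨1, hA⟩ : A₁) = 1 := rfl
    have e2 : (⟨1, hB⟩ : A₂) = 1 := rfl
    rw [e1, e2, map_one, map_one]
  obtain ⟨χ, ⟨hχc, hχ1, hχ2⟩, -⟩ := hUP K hK θ₁ θ₂ h1 h2 hagree
  exact ⟨χ, hχc, fun y hy => hχ1 ⟨y, hy⟩, fun y hy => hχ2 ⟨y, hy⟩⟩

end Main
section Amalg

variable {p : ℕ} [Fact p.Prime]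

theorem amalgCase (G : Type u) [Group G] [TopologicalSpace G]
    [IsTopologicalGroup G] (hG : IsProP p G) {A B C : Subgroup G}
    (ham : IsAmalgFreeProdP p G A B C)
    {A₁ A₂ : Subgroup ↥A} (hfree : IsAmalgFreeProdP p ↥A A₁ A₂ ⊥)
    (hA₁ : A₁ ≠ ⊥) (hA₂ : A₂ ≠ ⊥) {a : ↥A}
    (hc : conjSub a (C.subgroupOf A) ≤ A₁) :
    ∃ G₁ G₂ : Subgroup G, IsAmalgFreeProdP p G G₁ G₂ ⊥ ∧ G₁ ≠ ⊥ ∧ G₂ ≠ ⊥ := by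
  obtain ⟨hAcl, hBcl, hABC, hABgen, hUP⟩ := ham
  have hA₁cl := hfree.1
  have hA₂cl := hfree.2.1
  have hAgenA := hfree.2.2.2.1
  haveI : CompactSpace G := hG.1
  haveI : T2Space G := hG.2.1
  -- conjugation fact
  have hconjelt : ∀ (x : G) (hxA : x ∈ A), x ∈ C → (a⁻¹ * ⟨x, hxA⟩ * a : ↥A) ∈ A₁ := by
    intro x hxA hxC
    apply hc
    refine Subgroup.mem_map.mpr ⟨⟨x, hxA⟩, ?_, ?_⟩
    · exact Subgroup.mem_subgroupOf.mpr hxC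
    · simp [MulAut.conj_apply]
  set α : G := (a : G) with hα
  set A₁' : Subgroup G := A₁.map A.subtype with hA₁'
  set A₂' : Subgroup G := A₂.map A.subtype with hA₂'
  set B' : Subgroup G := B.map (MulAut.conj α⁻¹).toMonoidHom with hB'
  set G₁ : Subgroup G := A₂' with hG₁
  set G₂ : Subgroup G := (A₁' ⊔ B').topologicalClosure with hG₂
  have hA₁G₂ : A₁' ≤ G₂ := le_trans le_sup_left (Subgroup.le_topologicalClosure _)
  have hB'G₂ : B' ≤ G₂ := le_trans le_sup_right (Subgroup.le_topologicalClosure _)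
  have hB'mem : ∀ b : G, b ∈ B → α⁻¹ * b * α ∈ B' := by
    intro b hb
    refine Subgroup.mem_map.mpr ⟨b, hb, ?_⟩
    simp [MulAut.conj_apply]
  -- the retraction r : G → G
  obtain ⟨χ₀, hχ₀c, hχ₀1, hχ₀2⟩ :=
    getChi hfree G hG (1 : A₁ →* G) (A.subtype.comp A₂.subtype) continuous_const
      (continuous_subtype_val.comp continuous_subtype_val)
  have hχ₀C : ∀ (x : G) (hxA : x ∈ A), x ∈ C → χ₀ (a⁻¹ * ⟨x, hxA⟩ * a) = 1 := by
    intro x hxA hxC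
    rw [hχ₀1 _ (hconjelt x hxA hxC)]
    rfl
  have hψAdef : ∀ z : ↥A,
      (χ₀.comp (MulAut.conj a⁻¹).toMonoidHom) z = χ₀ (a⁻¹ * z * a) := by
    intro z; simp [MulAut.conj_apply]
  obtain ⟨φ₀, ⟨hφ₀c, hφ₀A, hφ₀B⟩, -⟩ :=
    hUP G hG (χ₀.comp (MulAut.conj a⁻¹).toMonoidHom) (1 : B →* G)
      (hχ₀c.comp (myConjCont a⁻¹))
      continuous_const
      (by
        intro x hxA hxB
        have hxC : x ∈ C := hABC ▸ ⟨hxA, hxB⟩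
        rw [hψAdef ⟨x, hxA⟩, hχ₀C x hxA hxC]
        rfl)
  set r : G →* G := φ₀.comp (MulAut.conj α).toMonoidHom with hr
  have hrc : Continuous r := hφ₀c.comp (myConjCont α)
  have hr_on_A : ∀ z : ↥A, r z = χ₀ z := by
    intro z
    have h1 : α * (z : G) * α⁻¹ = ((a * z * a⁻¹ : ↥A) : G) := by push_cast; rfl
    show φ₀ (α * (z : G) * α⁻¹) = χ₀ z
    rw [h1, hφ₀A (a * z * a⁻¹), hψAdef]
    congr 1
    group
  have hrA₁' : ∀ x ∈ A₁', r x = 1 := by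
    rintro x ⟨y, hy, rfl⟩
    show r (y : G) = 1
    rw [hr_on_A y, hχ₀1 y hy]; rfl
  have hrA₂' : ∀ x ∈ A₂', r x = x := by
    rintro x ⟨y, hy, rfl⟩
    show r (y : G) = (y : G)
    rw [hr_on_A y, hχ₀2 y hy]; rfl
  have hrB' : ∀ x ∈ B', r x = 1 := by
    rintro x ⟨b, hb, rfl⟩
    show φ₀ (α * (MulAut.conj α⁻¹ b) * α⁻¹) = 1
    have h1 : α * (MulAut.conj α⁻¹ b) * α⁻¹ = b := by
      simp [MulAut.conj_apply]; group
    rw [h1, hφ₀B ⟨b, hb⟩]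
    rfl
  have hG₂ker : G₂ ≤ r.ker := by
    apply Subgroup.topologicalClosure_minimal _ _ (myKerClosed hrc)
    exact sup_le (fun x hx => hrA₁' x hx) (fun x hx => hrB' x hx)
  -- intersection is trivial
  have hInf : G₁ ⊓ G₂ = ⊥ := by
    rw [eq_bot_iff]
    rintro x ⟨hx1, hx2⟩
    have h1 : r x = x := hrA₂' x hx1
    have h2 : r x = 1 := hG₂ker hx2
    rw [Subgroup.mem_bot, ← h1, h2]
  -- generation
  have hGen : (G₁ ⊔ G₂).topologicalClosure = ⊤ := by
    set M : Subgroup G := (G₁ ⊔ G₂).topologicalClosure with hM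
    have hMcl : IsClosed (M : Set G) := Subgroup.isClosed_topologicalClosure _
    have hA₁M : A₁' ≤ M := le_trans hA₁G₂ (le_trans le_sup_right (Subgroup.le_topologicalClosure _))
    have hA₂M : A₂' ≤ M := le_trans le_sup_left (Subgroup.le_topologicalClosure _)
    have hB'M : B' ≤ M := le_trans hB'G₂ (le_trans le_sup_right (Subgroup.le_topologicalClosure _))
    have hAM : A ≤ M := by
      intro x hx
      have hx2 : (⟨x, hx⟩ : ↥A) ∈ _root_.closure ((A₁ ⊔ A₂ : Subgroup ↥A) : Set ↥A) := by
        have : (⟨x, hx⟩ : ↥A) ∈ (A₁ ⊔ A₂).topologicalClosure := by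
          rw [hAgenA]; trivial
        exact this
      have h3 : x ∈ Subtype.val '' _root_.closure ((A₁ ⊔ A₂ : Subgroup ↥A) : Set ↥A) :=
        ⟨_, hx2, rfl⟩
      have h4 : x ∈ _root_.closure (Subtype.val '' ((A₁ ⊔ A₂ : Subgroup ↥A) : Set ↥A)) :=
        image_closure_subset_closure_image continuous_subtype_val h3
      have h5 : Subtype.val '' ((A₁ ⊔ A₂ : Subgroup ↥A) : Set ↥A) ⊆ (M : Set G) := by
        rintro _ ⟨y, hy, rfl⟩
        have : (y : G) ∈ (A₁ ⊔ A₂).map A.subtype := Subgroup.mem_map_of_mem _ hy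
        rw [Subgroup.map_sup] at this
        exact sup_le hA₁M hA₂M this
      exact closure_minimal h5 hMcl h4
    have hBM : B ≤ M := by
      intro b hb
      have h1 : α⁻¹ * b * α ∈ M := hB'M (hB'mem b hb)
      have h2 : α ∈ M := hAM a.2
      have : α * (α⁻¹ * b * α) * α⁻¹ ∈ M := mul_mem (mul_mem h2 h1) (inv_mem h2)
      simpa [mul_assoc] using this
    rw [eq_top_iff, ← hABgen]
    exact Subgroup.topologicalClosure_minimal _ (sup_le hAM hBM) hMcl
  -- nontriviality
  have hG₁ne : G₁ ≠ ⊥ := by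
    obtain ⟨⟨y, hy⟩, hy1⟩ := Subgroup.ne_bot_iff_exists_ne_one.mp hA₂
    refine Subgroup.ne_bot_iff_exists_ne_one.mpr ⟨⟨y, Subgroup.mem_map_of_mem _ hy⟩, ?_⟩
    simp only [ne_eq, Subtype.ext_iff]
    intro h
    apply hy1
    apply Subtype.ext
    apply Subtype.ext
    simpa using h
  have hG₂ne : G₂ ≠ ⊥ := by
    obtain ⟨⟨y, hy⟩, hy1⟩ := Subgroup.ne_bot_iff_exists_ne_one.mp hA₁
    refine Subgroup.ne_bot_iff_exists_ne_one.mpr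
      ⟨⟨y, hA₁G₂ (Subgroup.mem_map_of_mem _ hy)⟩, ?_⟩
    simp only [ne_eq, Subtype.ext_iff]
    intro h
    apply hy1
    apply Subtype.ext
    apply Subtype.ext
    simpa using h
  refine ⟨G₁, G₂, ⟨myMapClosed hAcl A₂ hA₂cl, Subgroup.isClosed_topologicalClosure _,
    hInf, hGen, ?_⟩, hG₁ne, hG₂ne⟩
  -- universal property
  intro K _ _ _ hK ψ₁ ψ₂ hψ₁c hψ₂c _
  haveI : T2Space K := hK.2.1
  -- build χ
  have hA₂G₁ : ∀ (y : ↥A), y ∈ A₂ → (y : G) ∈ G₁ := fun y hy => Subgroup.mem_map_of_mem _ hy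
  have hA₁G₂' : ∀ (y : ↥A), y ∈ A₁ → (y : G) ∈ G₂ :=
    fun y hy => hA₁G₂ (Subgroup.mem_map_of_mem _ hy)
  set ι₁ : A₁ →* ↥G₂ :=
    (A.subtype.comp A₁.subtype).codRestrict G₂ (fun y => hA₁G₂' y y.2) with hι₁
  set ι₂ : A₂ →* ↥G₁ :=
    (A.subtype.comp A₂.subtype).codRestrict G₁ (fun y => hA₂G₁ y y.2) with hι₂
  have hι₁c : Continuous ι₁ :=
    Continuous.subtype_mk (continuous_subtype_val.comp continuous_subtype_val) _
  have hι₂c : Continuous ι₂ :=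
    Continuous.subtype_mk (continuous_subtype_val.comp continuous_subtype_val) _
  obtain ⟨χ, hχc, hχ1, hχ2⟩ := getChi hfree K hK (ψ₂.comp ι₁) (ψ₁.comp ι₂)
    (hψ₂c.comp hι₁c) (hψ₁c.comp hι₂c)
  have hB'G₂mem : ∀ b : B, ((MulAut.conj α⁻¹).toMonoidHom.comp B.subtype) b ∈ G₂ :=
    fun b => hB'G₂ (Subgroup.mem_map_of_mem _ b.2)
  set ρ : B →* ↥G₂ :=
    ((MulAut.conj α⁻¹).toMonoidHom.comp B.subtype).codRestrict G₂ hB'G₂mem with hρ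
  have hρc : Continuous ρ :=
    Continuous.subtype_mk ((myConjCont α⁻¹).comp continuous_subtype_val) _
  obtain ⟨φK, ⟨hφKc, hφKA, hφKB⟩, -⟩ :=
    hUP K hK (χ.comp (MulAut.conj a⁻¹).toMonoidHom) (ψ₂.comp ρ)
      (hχc.comp (myConjCont a⁻¹)) (hψ₂c.comp hρc)
      (by
        intro x hxA hxB
        have hxC : x ∈ C := hABC ▸ ⟨hxA, hxB⟩
        have h1 : (χ.comp (MulAut.conj a⁻¹).toMonoidHom) ⟨x, hxA⟩
            = χ (a⁻¹ * ⟨x, hxA⟩ * a) := by simp [MulAut.conj_apply]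
        rw [h1, hχ1 _ (hconjelt x hxA hxC)]
        show ψ₂ (ι₁ _) = ψ₂ (ρ ⟨x, hxB⟩)
        congr 1
        apply Subtype.ext
        show ((a⁻¹ * ⟨x, hxA⟩ * a : ↥A) : G) = MulAut.conj α⁻¹ x
        push_cast
        simp [MulAut.conj_apply, hα])
  set φ : G →* K := φK.comp (MulAut.conj α).toMonoidHom with hφ
  have hφc : Continuous φ := hφKc.comp (myConjCont α)
  have hφ_on_A : ∀ z : ↥A, φ z = χ z := by
    intro z
    have h1 : α * (z : G) * α⁻¹ = ((a * z * a⁻¹ : ↥A) : G) := by push_cast; rfl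
    show φK (α * (z : G) * α⁻¹) = χ z
    rw [h1, hφKA (a * z * a⁻¹)]
    show χ (MulAut.conj a⁻¹ (a * z * a⁻¹)) = χ z
    congr 1
    simp [MulAut.conj_apply]
    group
  have hφG₁ : ∀ w : ↥G₁, φ w = ψ₁ w := by
    intro w
    obtain ⟨y, hy, hval⟩ := w.2
    have hval' : (y : G) = (w : G) := hval
    rw [← hval', hφ_on_A y, hχ2 y hy]
    show ψ₁ (ι₂ ⟨y, hy⟩) = ψ₁ w
    congr 1
    exact Subtype.ext hval'
  have hφG₂ : ∀ w : ↥G₂, φ w = ψ₂ w := by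
    apply myDens' (A₁' ⊔ B') φ ψ₂ hφc hψ₂c
    intro x hx
    set P : Subgroup G := Subgroup.map G₂.subtype ((φ.comp G₂.subtype).eqLocus ψ₂) with hP
    have hP1 : A₁' ≤ P := by
      rintro _ ⟨y, hy, rfl⟩
      refine Subgroup.mem_map.mpr ⟨⟨(y : G), hA₁G₂' y hy⟩, ?_, rfl⟩
      show φ (y : G) = ψ₂ _
      rw [hφ_on_A y, hχ1 y hy]
      rfl
    have hP2 : B' ≤ P := by
      rintro _ ⟨b, hb, rfl⟩
      refine Subgroup.mem_map.mpr ⟨⟨_, hB'G₂ (Subgroup.mem_map_of_mem _ hb)⟩, ?_, rfl⟩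
      show φ (MulAut.conj α⁻¹ b) = ψ₂ _
      have h1 : α * (MulAut.conj α⁻¹ b) * α⁻¹ = b := by
        simp [MulAut.conj_apply]; group
      have h2 : φ (MulAut.conj α⁻¹ b) = φK b := by
        show φK (α * (MulAut.conj α⁻¹ b) * α⁻¹) = φK b
        rw [h1]
      rw [h2, hφKB ⟨b, hb⟩]
      show ψ₂ (ρ ⟨b, hb⟩) = ψ₂ _
      rfl
    obtain ⟨z, hz, hval⟩ := Subgroup.mem_map.mp ((sup_le hP1 hP2) hx)
    have hz' : φ (z : G) = ψ₂ z := hz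
    have hval' : (z : G) = x := hval
    subst hval'
    exact hz'.trans (congrArg ψ₂ (Subtype.ext rfl))
  refine ⟨φ, ⟨hφc, hφG₁, hφG₂⟩, ?_⟩
  rintro φ' ⟨hφ'c, h1, h2⟩
  have hE : G₁ ⊔ G₂ ≤ φ'.eqLocus φ := by
    apply sup_le
    · intro x hx
      show φ' x = φ x
      rw [h1 ⟨x, hx⟩, hφG₁ ⟨x, hx⟩]
    · intro x hx
      show φ' x = φ x
      rw [h2 ⟨x, hx⟩, hφG₂ ⟨x, hx⟩]
  have : (G₁ ⊔ G₂).topologicalClosure ≤ φ'.eqLocus φ :=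
    Subgroup.topologicalClosure_minimal _ hE (isClosed_eq hφ'c hφc)
  rw [hGen] at this
  ext x
  exact this (Subgroup.mem_top x)


end Amalg
section HNN1

variable {p : ℕ} [Fact p.Prime]

theorem amalgSymm {G : Type u} [Group G] [TopologicalSpace G] [IsTopologicalGroup G]
    {A B C : Subgroup G} (h : IsAmalgFreeProdP p G A B C) : IsAmalgFreeProdP p G B A C := by
  obtain ⟨h1, h2, h3, h4, h5⟩ := h
  refine ⟨h2, h1, by rw [inf_comm]; exact h3, by rw [sup_comm]; exact h4, ?_⟩
  intro K _ _ _ hK ψ₁ ψ₂ c1 c2 hag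
  obtain ⟨φ, ⟨hc, hA, hB⟩, huniq⟩ := h5 K hK ψ₂ ψ₁ c2 c1 (fun x hA hB => (hag x hB hA).symm)
  exact ⟨φ, ⟨hc, hB, hA⟩, fun φ' ⟨c', hB', hA'⟩ => huniq φ' ⟨c', hA', hB'⟩⟩

theorem hnnSame (G : Type u) [Group G] [TopologicalSpace G]
    [IsTopologicalGroup G] (hG : IsProP p G) {A C : Subgroup G} {t : G}
    (hhnn : IsHNNProP p G A C t)
    {A₁ A₂ : Subgroup ↥A} (hfree : IsAmalgFreeProdP p ↥A A₁ A₂ ⊥)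
    (hA₁ : A₁ ≠ ⊥) (hA₂ : A₂ ≠ ⊥) {a a' : ↥A}
    (hc : conjSub a (C.subgroupOf A) ≤ A₁)
    (hc' : conjSub a' ((conjSub t C).subgroupOf A) ≤ A₁) :
    ∃ G₁ G₂ : Subgroup G, IsAmalgFreeProdP p G G₁ G₂ ⊥ ∧ G₁ ≠ ⊥ ∧ G₂ ≠ ⊥ := by
  obtain ⟨hAcl, hCcl, hCA, hCt, hgen, hUP⟩ := hhnn
  have hA₁cl := hfree.1
  have hA₂cl := hfree.2.1
  have hAgenA := hfree.2.2.2.1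
  haveI : CompactSpace G := hG.1
  haveI : T2Space G := hG.2.1
  have hconjelt : ∀ (x : G) (hxA : x ∈ A), x ∈ C → (a⁻¹ * ⟨x, hxA⟩ * a : ↥A) ∈ A₁ := by
    intro x hxA hxC
    apply hc
    refine Subgroup.mem_map.mpr ⟨⟨x, hxA⟩, Subgroup.mem_subgroupOf.mpr hxC, ?_⟩
    simp [MulAut.conj_apply]
  have hconjelt' : ∀ (x : G) (hxA : x ∈ A), x ∈ conjSub t C →
      (a'⁻¹ * ⟨x, hxA⟩ * a' : ↥A) ∈ A₁ := by
    intro x hxA hxC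
    apply hc'
    refine Subgroup.mem_map.mpr ⟨⟨x, hxA⟩, Subgroup.mem_subgroupOf.mpr hxC, ?_⟩
    simp [MulAut.conj_apply]
  have htct : ∀ c ∈ C, t⁻¹ * c * t ∈ conjSub t C := by
    intro c hcC
    refine Subgroup.mem_map.mpr ⟨c, hcC, ?_⟩
    simp [MulAut.conj_apply]
  set α : G := (a : G) with hα
  set α' : G := (a' : G) with hα'
  set t' : G := α⁻¹ * t * α' with ht'
  set A₁' : Subgroup G := A₁.map A.subtype with hA₁'
  set A₂' : Subgroup G := A₂.map A.subtype with hA₂'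
  set G₁ : Subgroup G := A₂' with hG₁
  set G₂ : Subgroup G := (A₁' ⊔ Subgroup.closure {t'}).topologicalClosure with hG₂
  have hA₁G₂ : A₁' ≤ G₂ := le_trans le_sup_left (Subgroup.le_topologicalClosure _)
  have ht'G₂ : t' ∈ G₂ :=
    (le_trans le_sup_right (Subgroup.le_topologicalClosure _))
      (Subgroup.subset_closure (Set.mem_singleton t'))
  obtain ⟨χ₀, hχ₀c, hχ₀1, hχ₀2⟩ :=
    getChi hfree G hG (1 : A₁ →* G) (A.subtype.comp A₂.subtype) continuous_const
      (continuous_subtype_val.comp continuous_subtype_val)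
  have hχ₀C : ∀ (x : G) (hxA : x ∈ A), x ∈ C → χ₀ ⟨x, hxA⟩ = 1 := by
    intro x hxA hxC
    have e : (⟨x, hxA⟩ : ↥A) = a * (a⁻¹ * ⟨x, hxA⟩ * a) * a⁻¹ := by group
    rw [e, map_mul, map_mul, map_inv, hχ₀1 _ (hconjelt x hxA hxC)]
    simp
  have hχ₀Ct : ∀ (x : G) (hxA : x ∈ A), x ∈ conjSub t C → χ₀ ⟨x, hxA⟩ = 1 := by
    intro x hxA hxC
    have e : (⟨x, hxA⟩ : ↥A) = a' * (a'⁻¹ * ⟨x, hxA⟩ * a') * a'⁻¹ := by group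
    rw [e, map_mul, map_mul, map_inv, hχ₀1 _ (hconjelt' x hxA hxC)]
    simp
  obtain ⟨r, ⟨hrc, hrA, hrt⟩, -⟩ :=
    hUP G hG χ₀ (χ₀ a * (χ₀ a')⁻¹) hχ₀c
      (by
        intro c hcC hcA hct
        rw [hχ₀C c hcA hcC, hχ₀Ct _ hct (htct c hcC)]
        group)
  have hrα : r α = χ₀ a := hrA a
  have hrα' : r α' = χ₀ a' := hrA a'
  have hrt' : r t' = 1 := by
    rw [ht', map_mul, map_mul, map_inv, hrα, hrα', hrt]
    group
  have hrA₁' : ∀ x ∈ A₁', r x = 1 := by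
    rintro x ⟨y, hy, rfl⟩
    show r (y : G) = 1
    rw [hrA y, hχ₀1 y hy]; rfl
  have hrA₂' : ∀ x ∈ A₂', r x = x := by
    rintro x ⟨y, hy, rfl⟩
    show r (y : G) = (y : G)
    rw [hrA y, hχ₀2 y hy]; rfl
  have hG₂ker : G₂ ≤ r.ker := by
    apply Subgroup.topologicalClosure_minimal _ _ (myKerClosed hrc)
    refine sup_le (fun x hx => hrA₁' x hx) ((Subgroup.closure_le _).mpr ?_)
    intro x hx
    rw [Set.mem_singleton_iff] at hx
    subst hx
    exact hrt'
  have hInf : G₁ ⊓ G₂ = ⊥ := by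
    rw [eq_bot_iff]
    rintro x ⟨hx1, hx2⟩
    have h1 : r x = x := hrA₂' x hx1
    have h2 : r x = 1 := hG₂ker hx2
    rw [Subgroup.mem_bot, ← h1, h2]
  have hGen : (G₁ ⊔ G₂).topologicalClosure = ⊤ := by
    set M : Subgroup G := (G₁ ⊔ G₂).topologicalClosure with hM
    have hMcl : IsClosed (M : Set G) := Subgroup.isClosed_topologicalClosure _
    have hA₁M : A₁' ≤ M := le_trans hA₁G₂ (le_trans le_sup_right (Subgroup.le_topologicalClosure _))
    have hA₂M : A₂' ≤ M := le_trans le_sup_left (Subgroup.le_topologicalClosure _)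
    have ht'M : t' ∈ M :=
      (le_trans le_sup_right (Subgroup.le_topologicalClosure _)) ht'G₂
    have hAM : A ≤ M := by
      intro x hx
      have hx2 : (⟨x, hx⟩ : ↥A) ∈ _root_.closure ((A₁ ⊔ A₂ : Subgroup ↥A) : Set ↥A) := by
        have : (⟨x, hx⟩ : ↥A) ∈ (A₁ ⊔ A₂).topologicalClosure := by
          rw [hAgenA]; trivial
        exact this
      have h4 : x ∈ _root_.closure (Subtype.val '' ((A₁ ⊔ A₂ : Subgroup ↥A) : Set ↥A)) :=
        image_closure_subset_closure_image continuous_subtype_val ⟨_, hx2, rfl⟩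
      have h5 : Subtype.val '' ((A₁ ⊔ A₂ : Subgroup ↥A) : Set ↥A) ⊆ (M : Set G) := by
        rintro _ ⟨y, hy, rfl⟩
        have : (y : G) ∈ (A₁ ⊔ A₂).map A.subtype := Subgroup.mem_map_of_mem _ hy
        rw [Subgroup.map_sup] at this
        exact sup_le hA₁M hA₂M this
      exact closure_minimal h5 hMcl h4
    have htM : t ∈ M := by
      have h1 : α ∈ M := hAM a.2
      have h2 : α' ∈ M := hAM a'.2
      have : α * t' * α'⁻¹ ∈ M := mul_mem (mul_mem h1 ht'M) (inv_mem h2)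
      have e : α * t' * α'⁻¹ = t := by rw [ht']; group
      rwa [e] at this
    rw [eq_top_iff, ← hgen]
    refine Subgroup.topologicalClosure_minimal _ (sup_le hAM ?_) hMcl
    refine (Subgroup.closure_le _).mpr ?_
    intro x hx
    rw [Set.mem_singleton_iff] at hx
    subst hx
    exact htM
  have hG₁ne : G₁ ≠ ⊥ := by
    obtain ⟨⟨y, hy⟩, hy1⟩ := Subgroup.ne_bot_iff_exists_ne_one.mp hA₂
    refine Subgroup.ne_bot_iff_exists_ne_one.mpr ⟨⟨y, Subgroup.mem_map_of_mem _ hy⟩, ?_⟩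
    simp only [ne_eq, Subtype.ext_iff]
    intro h
    apply hy1
    apply Subtype.ext; apply Subtype.ext
    simpa using h
  have hG₂ne : G₂ ≠ ⊥ := by
    obtain ⟨⟨y, hy⟩, hy1⟩ := Subgroup.ne_bot_iff_exists_ne_one.mp hA₁
    refine Subgroup.ne_bot_iff_exists_ne_one.mpr
      ⟨⟨y, hA₁G₂ (Subgroup.mem_map_of_mem _ hy)⟩, ?_⟩
    simp only [ne_eq, Subtype.ext_iff]
    intro h
    apply hy1
    apply Subtype.ext; apply Subtype.ext
    simpa using h
  refine ⟨G₁, G₂, ⟨myMapClosed hAcl A₂ hA₂cl, Subgroup.isClosed_topologicalClosure _,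
    hInf, hGen, ?_⟩, hG₁ne, hG₂ne⟩
  intro K _ _ _ hK ψ₁ ψ₂ hψ₁c hψ₂c _
  haveI : T2Space K := hK.2.1
  have hA₂G₁ : ∀ (y : ↥A), y ∈ A₂ → (y : G) ∈ G₁ := fun y hy => Subgroup.mem_map_of_mem _ hy
  have hA₁G₂' : ∀ (y : ↥A), y ∈ A₁ → (y : G) ∈ G₂ :=
    fun y hy => hA₁G₂ (Subgroup.mem_map_of_mem _ hy)
  set ι₁ : A₁ →* ↥G₂ :=
    (A.subtype.comp A₁.subtype).codRestrict G₂ (fun y => hA₁G₂' y y.2) with hι₁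
  set ι₂ : A₂ →* ↥G₁ :=
    (A.subtype.comp A₂.subtype).codRestrict G₁ (fun y => hA₂G₁ y y.2) with hι₂
  have hι₁c : Continuous ι₁ :=
    Continuous.subtype_mk (continuous_subtype_val.comp continuous_subtype_val) _
  have hι₂c : Continuous ι₂ :=
    Continuous.subtype_mk (continuous_subtype_val.comp continuous_subtype_val) _
  obtain ⟨χ, hχc, hχ1, hχ2⟩ := getChi hfree K hK (ψ₂.comp ι₁) (ψ₁.comp ι₂)
    (hψ₂c.comp hι₁c) (hψ₁c.comp hι₂c)
  set τ' : ↥G₂ := ⟨t', ht'G₂⟩ with hτ'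
  set kK : K := χ a * ψ₂ τ' * (χ a')⁻¹ with hkK
  obtain ⟨ω, ⟨hωc, hωA, hωt⟩, -⟩ :=
    hUP K hK χ kK hχc
      (by
        intro c hcC hcA hct
        have m1 : (a⁻¹ * ⟨c, hcA⟩ * a : ↥A) ∈ A₁ := hconjelt c hcA hcC
        have m2 : (a'⁻¹ * ⟨t⁻¹ * c * t, hct⟩ * a' : ↥A) ∈ A₁ :=
          hconjelt' _ hct (htct c hcC)
        have e1 : χ ⟨c, hcA⟩ = χ a * ψ₂ (ι₁ ⟨_, m1⟩) * (χ a)⁻¹ := by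
          conv_lhs => rw [show (⟨c, hcA⟩ : ↥A) = a * (a⁻¹ * ⟨c, hcA⟩ * a) * a⁻¹ by group]
          rw [map_mul, map_mul, map_inv, hχ1 _ m1]
          rfl
        have e2 : χ ⟨t⁻¹ * c * t, hct⟩ = χ a' * ψ₂ (ι₁ ⟨_, m2⟩) * (χ a')⁻¹ := by
          conv_lhs => rw [show (⟨t⁻¹ * c * t, hct⟩ : ↥A)
            = a' * (a'⁻¹ * ⟨t⁻¹ * c * t, hct⟩ * a') * a'⁻¹ by group]
          rw [map_mul, map_mul, map_inv, hχ1 _ m2]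
          rfl
        have e3 : ψ₂ (τ'⁻¹ * ι₁ ⟨_, m1⟩ * τ') = ψ₂ (ι₁ ⟨_, m2⟩) := by
          congr 1
          apply Subtype.ext
          show t'⁻¹ * ((a⁻¹ * ⟨c, hcA⟩ * a : ↥A) : G) * t'
            = ((a'⁻¹ * ⟨t⁻¹ * c * t, hct⟩ * a' : ↥A) : G)
          push_cast
          rw [ht', hα, hα']
          group
        rw [e1, e2, hkK]
        rw [map_mul, map_mul, map_inv] at e3
        rw [← e3]
        group)
  have hωα : ω α = χ a := hωA a
  have hωα' : ω α' = χ a' := hωA a'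
  have hωt' : ω t' = ψ₂ τ' := by
    rw [ht', map_mul, map_mul, map_inv, hωα, hωα', hωt, hkK]
    group
  have hωG₁ : ∀ w : ↥G₁, ω w = ψ₁ w := by
    intro w
    obtain ⟨y, hy, hval⟩ := w.2
    have hval' : (y : G) = (w : G) := hval
    rw [← hval', hωA y, hχ2 y hy]
    show ψ₁ (ι₂ ⟨y, hy⟩) = ψ₁ w
    congr 1
    exact Subtype.ext hval'
  have hωG₂ : ∀ w : ↥G₂, ω w = ψ₂ w := by
    apply myDens' (A₁' ⊔ Subgroup.closure {t'}) ω ψ₂ hωc hψ₂c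
    intro x hx
    set P : Subgroup G := Subgroup.map G₂.subtype ((ω.comp G₂.subtype).eqLocus ψ₂) with hP
    have hP1 : A₁' ≤ P := by
      rintro _ ⟨y, hy, rfl⟩
      refine Subgroup.mem_map.mpr ⟨⟨(y : G), hA₁G₂' y hy⟩, ?_, rfl⟩
      show ω (y : G) = ψ₂ _
      rw [hωA y, hχ1 y hy]
      rfl
    have hP2 : Subgroup.closure {t'} ≤ P := by
      refine (Subgroup.closure_le _).mpr ?_
      intro x hx
      rw [Set.mem_singleton_iff] at hx
      subst hx
      refine Subgroup.mem_map.mpr ⟨τ', ?_, rfl⟩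
      show ω t' = ψ₂ τ'
      exact hωt'
    obtain ⟨z, hz, hval⟩ := Subgroup.mem_map.mp ((sup_le hP1 hP2) hx)
    have hz' : ω (z : G) = ψ₂ z := hz
    have hval' : (z : G) = x := hval
    subst hval'
    exact hz'.trans (congrArg ψ₂ (Subtype.ext rfl))
  refine ⟨ω, ⟨hωc, hωG₁, hωG₂⟩, ?_⟩
  rintro φ' ⟨hφ'c, h1, h2⟩
  have hE : G₁ ⊔ G₂ ≤ φ'.eqLocus ω := by
    apply sup_le
    · intro x hx
      show φ' x = ω x
      rw [h1 ⟨x, hx⟩, hωG₁ ⟨x, hx⟩]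
    · intro x hx
      show φ' x = ω x
      rw [h2 ⟨x, hx⟩, hωG₂ ⟨x, hx⟩]
  have hfin : (G₁ ⊔ G₂).topologicalClosure ≤ φ'.eqLocus ω :=
    Subgroup.topologicalClosure_minimal _ hE (isClosed_eq hφ'c hωc)
  rw [hGen] at hfin
  ext x
  exact hfin (Subgroup.mem_top x)

end HNN1
section HNN2

variable {p : ℕ} [Fact p.Prime]

theorem hnnCross (G : Type u) [Group G] [TopologicalSpace G]
    [IsTopologicalGroup G] (hG : IsProP p G) {A C : Subgroup G} {t : G}
    (hhnn : IsHNNProP p G A C t) (hCZp : IsTopIsoZp p ↥C)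
    {A₁ A₂ : Subgroup ↥A} (hfree : IsAmalgFreeProdP p ↥A A₁ A₂ ⊥)
    (hA₁ : A₁ ≠ ⊥) (hA₂ : A₂ ≠ ⊥) {a a' : ↥A}
    (hc : conjSub a (C.subgroupOf A) ≤ A₁)
    (hc' : conjSub a' ((conjSub t C).subgroupOf A) ≤ A₂) :
    ∃ G₁ G₂ : Subgroup G, IsAmalgFreeProdP p G G₁ G₂ ⊥ ∧ G₁ ≠ ⊥ ∧ G₂ ≠ ⊥ := by
  obtain ⟨hAcl, hCcl, hCA, hCt, hgen, hUP⟩ := hhnn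
  have hA₁cl := hfree.1
  have hA₂cl := hfree.2.1
  have hAgenA := hfree.2.2.2.1
  haveI : CompactSpace G := hG.1
  haveI : T2Space G := hG.2.1
  have hconjelt : ∀ (x : G) (hxA : x ∈ A), x ∈ C → (a⁻¹ * ⟨x, hxA⟩ * a : ↥A) ∈ A₁ := by
    intro x hxA hxC
    apply hc
    refine Subgroup.mem_map.mpr ⟨⟨x, hxA⟩, Subgroup.mem_subgroupOf.mpr hxC, ?_⟩
    simp [MulAut.conj_apply]
  have hconjelt' : ∀ (x : G) (hxA : x ∈ A), x ∈ conjSub t C →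
      (a'⁻¹ * ⟨x, hxA⟩ * a' : ↥A) ∈ A₂ := by
    intro x hxA hxC
    apply hc'
    refine Subgroup.mem_map.mpr ⟨⟨x, hxA⟩, Subgroup.mem_subgroupOf.mpr hxC, ?_⟩
    simp [MulAut.conj_apply]
  have htct : ∀ c ∈ C, t⁻¹ * c * t ∈ conjSub t C := by
    intro c hcC
    refine Subgroup.mem_map.mpr ⟨c, hcC, ?_⟩
    simp [MulAut.conj_apply]
  set α : G := (a : G) with hα
  set α' : G := (a' : G) with hα'
  set t' : G := α⁻¹ * t * α' with ht'
  -- t' is nontrivial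
  have ht'ne : t' ≠ 1 := by
    intro h
    have htA : t ∈ A := by
      have e : t = α * α'⁻¹ := by
        have : α * t' * α'⁻¹ = t := by rw [ht']; group
        rw [← this, h]
        group
      rw [e]
      exact mul_mem a.2 (inv_mem a'.2)
    obtain ⟨e, he, he'⟩ := hCZp
    haveI : Nontrivial ↥C := e.toEquiv.nontrivial
    obtain ⟨c₀, hc₀⟩ := exists_ne (1 : ↥C)
    have hcomm : ∀ x y : ↥C, x * y = y * x := by
      intro x y
      apply e.injective
      rw [map_mul, map_mul, mul_comm]
    obtain ⟨ω, ⟨hωc, hωA, hωt⟩, -⟩ :=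
      hUP G hG A.subtype ((c₀ : G) * t) continuous_subtype_val
        (by
          intro c hcC hcA hct
          show ((c₀ : G) * t)⁻¹ * c * ((c₀ : G) * t) = t⁻¹ * c * t
          have hcc : c * (c₀ : G) = (c₀ : G) * c := by
            have := hcomm ⟨c, hcC⟩ c₀
            exact congrArg Subtype.val this
          have h1 : ((c₀ : G))⁻¹ * c * (c₀ : G) = c := by
            rw [mul_assoc, hcc, ← mul_assoc, inv_mul_cancel, one_mul]
          rw [mul_inv_rev]
          calc t⁻¹ * (c₀ : G)⁻¹ * c * ((c₀ : G) * t)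
              = t⁻¹ * ((c₀ : G)⁻¹ * c * (c₀ : G)) * t := by group
            _ = t⁻¹ * c * t := by rw [h1])
    have h2 : ω t = t := by
      have := hωA ⟨t, htA⟩
      simpa using this
    rw [hωt] at h2
    have : (c₀ : G) = 1 := by
      have := mul_right_cancel (h2.trans (one_mul t).symm)
      exact this
    exact hc₀ (Subtype.ext this)
  set T : G →* G := (MulAut.conj t').toMonoidHom with hT
  set A₁' : Subgroup G := A₁.map A.subtype with hA₁'
  set A₂' : Subgroup G := A₂.map A.subtype with hA₂'
  set B'' : Subgroup G := A₂'.map T with hB''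
  set G₁ : Subgroup G := (A₁' ⊔ B'').topologicalClosure with hG₁
  set G₂ : Subgroup G := (Subgroup.closure {t'}).topologicalClosure with hG₂
  have hA₁G₁ : A₁' ≤ G₁ := le_trans le_sup_left (Subgroup.le_topologicalClosure _)
  have hB''G₁ : B'' ≤ G₁ := le_trans le_sup_right (Subgroup.le_topologicalClosure _)
  have ht'G₂ : t' ∈ G₂ :=
    (Subgroup.le_topologicalClosure _) (Subgroup.subset_closure (Set.mem_singleton t'))
  -- retraction r with r|A = 1, r t = t'
  obtain ⟨r, ⟨hrc, hrA, hrt⟩, -⟩ :=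
    hUP G hG (1 : ↥A →* G) t' continuous_const
      (by intro c hcC hcA hct; simp)
  have hrα : r α = 1 := hrA a
  have hrα' : r α' = 1 := hrA a'
  have hrt' : r t' = t' := by
    conv_lhs => rw [ht', map_mul, map_mul, map_inv, hrα, hrα', hrt]
    group
  have hrA' : ∀ x ∈ A, r x = 1 := by
    intro x hx
    exact hrA ⟨x, hx⟩
  have hG₁ker : G₁ ≤ r.ker := by
    apply Subgroup.topologicalClosure_minimal _ _ (myKerClosed hrc)
    refine sup_le ?_ ?_
    · rintro _ ⟨y, hy, rfl⟩
      exact hrA y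
    · rintro _ ⟨x, hx, rfl⟩
      obtain ⟨y, hy, rfl⟩ := hx
      show r (T (y : G)) = 1
      have e : T (y : G) = t' * (y : G) * t'⁻¹ := rfl
      rw [e, map_mul, map_mul, map_inv, hrt', hrA y]
      simp
  have hG₂fix : ∀ x ∈ G₂, r x = x := by
    intro x hx
    have h1 : Subgroup.closure {t'} ≤ r.eqLocus (MonoidHom.id G) := by
      refine (Subgroup.closure_le _).mpr ?_
      intro x hx
      rw [Set.mem_singleton_iff] at hx
      subst hx
      exact hrt'
    have h2 : G₂ ≤ r.eqLocus (MonoidHom.id G) :=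
      Subgroup.topologicalClosure_minimal _ h1 (isClosed_eq hrc continuous_id)
    exact h2 hx
  have hInf : G₁ ⊓ G₂ = ⊥ := by
    rw [eq_bot_iff]
    rintro x ⟨hx1, hx2⟩
    have h1 : r x = x := hG₂fix x hx2
    have h2 : r x = 1 := hG₁ker hx1
    rw [Subgroup.mem_bot, ← h1, h2]
  have hGen : (G₁ ⊔ G₂).topologicalClosure = ⊤ := by
    set M : Subgroup G := (G₁ ⊔ G₂).topologicalClosure with hM
    have hMcl : IsClosed (M : Set G) := Subgroup.isClosed_topologicalClosure _
    have hA₁M : A₁' ≤ M := le_trans hA₁G₁ (le_trans le_sup_left (Subgroup.le_topologicalClosure _))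
    have hB''M : B'' ≤ M :=
      le_trans hB''G₁ (le_trans le_sup_left (Subgroup.le_topologicalClosure _))
    have ht'M : t' ∈ M :=
      (le_trans le_sup_right (Subgroup.le_topologicalClosure _)) ht'G₂
    have hA₂M : A₂' ≤ M := by
      intro x hx
      have h1 : T x ∈ B'' := Subgroup.mem_map_of_mem _ hx
      have h2 : T x = t' * x * t'⁻¹ := rfl
      have h3 : t' * x * t'⁻¹ ∈ M := h2 ▸ hB''M h1
      have : t'⁻¹ * (t' * x * t'⁻¹) * t' ∈ M := mul_mem (mul_mem (inv_mem ht'M) h3) ht'M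
      have e : t'⁻¹ * (t' * x * t'⁻¹) * t' = x := by group
      rwa [e] at this
    have hAM : A ≤ M := by
      intro x hx
      have hx2 : (⟨x, hx⟩ : ↥A) ∈ _root_.closure ((A₁ ⊔ A₂ : Subgroup ↥A) : Set ↥A) := by
        have : (⟨x, hx⟩ : ↥A) ∈ (A₁ ⊔ A₂).topologicalClosure := by
          rw [hAgenA]; trivial
        exact this
      have h4 : x ∈ _root_.closure (Subtype.val '' ((A₁ ⊔ A₂ : Subgroup ↥A) : Set ↥A)) :=
        image_closure_subset_closure_image continuous_subtype_val ⟨_, hx2, rfl⟩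
      have h5 : Subtype.val '' ((A₁ ⊔ A₂ : Subgroup ↥A) : Set ↥A) ⊆ (M : Set G) := by
        rintro _ ⟨y, hy, rfl⟩
        have : (y : G) ∈ (A₁ ⊔ A₂).map A.subtype := Subgroup.mem_map_of_mem _ hy
        rw [Subgroup.map_sup] at this
        exact sup_le hA₁M hA₂M this
      exact closure_minimal h5 hMcl h4
    have htM : t ∈ M := by
      have h1 : α ∈ M := hAM a.2
      have h2 : α' ∈ M := hAM a'.2
      have : α * t' * α'⁻¹ ∈ M := mul_mem (mul_mem h1 ht'M) (inv_mem h2)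
      have e : α * t' * α'⁻¹ = t := by rw [ht']; group
      rwa [e] at this
    rw [eq_top_iff, ← hgen]
    refine Subgroup.topologicalClosure_minimal _ (sup_le hAM ?_) hMcl
    refine (Subgroup.closure_le _).mpr ?_
    intro x hx
    rw [Set.mem_singleton_iff] at hx
    subst hx
    exact htM
  have hG₁ne : G₁ ≠ ⊥ := by
    obtain ⟨⟨y, hy⟩, hy1⟩ := Subgroup.ne_bot_iff_exists_ne_one.mp hA₁
    refine Subgroup.ne_bot_iff_exists_ne_one.mpr
      ⟨⟨y, hA₁G₁ (Subgroup.mem_map_of_mem _ hy)⟩, ?_⟩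
    simp only [ne_eq, Subtype.ext_iff]
    intro h
    apply hy1
    apply Subtype.ext; apply Subtype.ext
    simpa using h
  have hG₂ne : G₂ ≠ ⊥ := by
    refine Subgroup.ne_bot_iff_exists_ne_one.mpr ⟨⟨t', ht'G₂⟩, ?_⟩
    simp only [ne_eq, Subtype.ext_iff]
    exact ht'ne
  refine ⟨G₁, G₂, ⟨Subgroup.isClosed_topologicalClosure _,
    Subgroup.isClosed_topologicalClosure _, hInf, hGen, ?_⟩, hG₁ne, hG₂ne⟩
  intro K _ _ _ hK ψ₁ ψ₂ hψ₁c hψ₂c _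
  haveI : T2Space K := hK.2.1
  have hA₁G₁' : ∀ (y : ↥A), y ∈ A₁ → (y : G) ∈ G₁ :=
    fun y hy => hA₁G₁ (Subgroup.mem_map_of_mem _ hy)
  have hμmem : ∀ (y : ↥A), y ∈ A₂ → t' * (y : G) * t'⁻¹ ∈ G₁ := by
    intro y hy
    have h1 : T (y : G) ∈ B'' :=
      Subgroup.mem_map_of_mem _ (Subgroup.mem_map_of_mem _ hy)
    exact hB''G₁ h1
  set ι₁ : A₁ →* ↥G₁ :=
    (A.subtype.comp A₁.subtype).codRestrict G₁ (fun y => hA₁G₁' y y.2) with hι₁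
  have hι₁c : Continuous ι₁ :=
    Continuous.subtype_mk (continuous_subtype_val.comp continuous_subtype_val) _
  set μ : A₂ →* ↥G₁ :=
    (T.comp (A.subtype.comp A₂.subtype)).codRestrict G₁ (fun y => hμmem y y.2) with hμ
  have hμc : Continuous μ :=
    Continuous.subtype_mk
      ((myConjCont t').comp (continuous_subtype_val.comp continuous_subtype_val)) _
  set τ' : ↥G₂ := ⟨t', ht'G₂⟩ with hτ'
  set θ₂ : A₂ →* K :=
    ((MulAut.conj (ψ₂ τ')⁻¹).toMonoidHom).comp (ψ₁.comp μ) with hθ₂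
  have hθ₂c : Continuous θ₂ := (myConjCont (ψ₂ τ')⁻¹).comp (hψ₁c.comp hμc)
  have hθ₂eval : ∀ (y : A₂), θ₂ y = (ψ₂ τ')⁻¹ * ψ₁ (μ y) * ψ₂ τ' := by
    intro y
    show MulAut.conj (ψ₂ τ')⁻¹ (ψ₁ (μ y)) = _
    rw [MulAut.conj_apply]
    group
  obtain ⟨χ, hχc, hχ1, hχ2⟩ := getChi hfree K hK (ψ₁.comp ι₁) θ₂
    (hψ₁c.comp hι₁c) hθ₂c
  set kK : K := χ a * ψ₂ τ' * (χ a')⁻¹ with hkK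
  obtain ⟨ω, ⟨hωc, hωA, hωt⟩, -⟩ :=
    hUP K hK χ kK hχc
      (by
        intro c hcC hcA hct
        have m1 : (a⁻¹ * ⟨c, hcA⟩ * a : ↥A) ∈ A₁ := hconjelt c hcA hcC
        have m2 : (a'⁻¹ * ⟨t⁻¹ * c * t, hct⟩ * a' : ↥A) ∈ A₂ :=
          hconjelt' _ hct (htct c hcC)
        have e1 : χ ⟨c, hcA⟩ = χ a * ψ₁ (ι₁ ⟨_, m1⟩) * (χ a)⁻¹ := by
          conv_lhs => rw [show (⟨c, hcA⟩ : ↥A) = a * (a⁻¹ * ⟨c, hcA⟩ * a) * a⁻¹ by group]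
          rw [map_mul, map_mul, map_inv, hχ1 _ m1]
          rfl
        have e2 : χ ⟨t⁻¹ * c * t, hct⟩
            = χ a' * ((ψ₂ τ')⁻¹ * ψ₁ (μ ⟨_, m2⟩) * ψ₂ τ') * (χ a')⁻¹ := by
          conv_lhs => rw [show (⟨t⁻¹ * c * t, hct⟩ : ↥A)
            = a' * (a'⁻¹ * ⟨t⁻¹ * c * t, hct⟩ * a') * a'⁻¹ by group]
          rw [map_mul, map_mul, map_inv, hχ2 _ m2, hθ₂eval]
        have e3 : ψ₁ (ι₁ ⟨_, m1⟩) = ψ₁ (μ ⟨_, m2⟩) := by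
          congr 1
          apply Subtype.ext
          show ((a⁻¹ * ⟨c, hcA⟩ * a : ↥A) : G)
            = t' * ((a'⁻¹ * ⟨t⁻¹ * c * t, hct⟩ * a' : ↥A) : G) * t'⁻¹
          push_cast
          rw [ht', hα, hα']
          group
        rw [e1, e2, hkK, ← e3]
        group)
  have hωα : ω α = χ a := hωA a
  have hωα' : ω α' = χ a' := hωA a'
  have hωt' : ω t' = ψ₂ τ' := by
    rw [ht', map_mul, map_mul, map_inv, hωα, hωα', hωt, hkK]
    group
  have hωG₂ : ∀ w : ↥G₂, ω w = ψ₂ w := by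
    apply myDens' (Subgroup.closure {t'}) ω ψ₂ hωc hψ₂c
    intro x hx
    set P : Subgroup G := Subgroup.map G₂.subtype ((ω.comp G₂.subtype).eqLocus ψ₂) with hP
    have hP2 : Subgroup.closure {t'} ≤ P := by
      refine (Subgroup.closure_le _).mpr ?_
      intro x hx
      rw [Set.mem_singleton_iff] at hx
      subst hx
      exact Subgroup.mem_map.mpr ⟨τ', hωt', rfl⟩
    obtain ⟨z, hz, hval⟩ := Subgroup.mem_map.mp (hP2 hx)
    have hz' : ω (z : G) = ψ₂ z := hz
    have hval' : (z : G) = x := hval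
    subst hval'
    exact hz'.trans (congrArg ψ₂ (Subtype.ext rfl))
  have hωG₁ : ∀ w : ↥G₁, ω w = ψ₁ w := by
    apply myDens' (A₁' ⊔ B'') ω ψ₁ hωc hψ₁c
    intro x hx
    set P : Subgroup G := Subgroup.map G₁.subtype ((ω.comp G₁.subtype).eqLocus ψ₁) with hP
    have hP1 : A₁' ≤ P := by
      rintro _ ⟨y, hy, rfl⟩
      refine Subgroup.mem_map.mpr ⟨⟨(y : G), hA₁G₁' y hy⟩, ?_, rfl⟩
      show ω (y : G) = ψ₁ _
      rw [hωA y, hχ1 y hy]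
      rfl
    have hP2 : B'' ≤ P := by
      rintro _ ⟨x, hx, rfl⟩
      obtain ⟨y, hy, rfl⟩ := hx
      refine Subgroup.mem_map.mpr ⟨⟨T (y : G), hμmem y hy⟩, ?_, rfl⟩
      show ω (T (y : G)) = ψ₁ _
      have e : T (y : G) = t' * (y : G) * t'⁻¹ := rfl
      have key : ω (T (y : G)) = ψ₂ τ' * χ y * (ψ₂ τ')⁻¹ := by
        rw [e, map_mul, map_mul, map_inv, hωt', hωA y]
      rw [key, hχ2 y hy, hθ₂eval]
      have e2 : ψ₁ (μ ⟨y, hy⟩) = ψ₁ ⟨T (y : G), hμmem y hy⟩ :=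
        congrArg ψ₁ (Subtype.ext rfl)
      rw [e2]
      group
    obtain ⟨z, hz, hval⟩ := Subgroup.mem_map.mp ((sup_le hP1 hP2) hx)
    have hz' : ω (z : G) = ψ₁ z := hz
    have hval' : (z : G) = x := hval
    subst hval'
    exact hz'.trans (congrArg ψ₁ (Subtype.ext rfl))
  refine ⟨ω, ⟨hωc, hωG₁, hωG₂⟩, ?_⟩
  rintro φ' ⟨hφ'c, h1, h2⟩
  have hE : G₁ ⊔ G₂ ≤ φ'.eqLocus ω := by
    apply sup_le
    · intro x hx
      show φ' x = ω x
      rw [h1 ⟨x, hx⟩, hωG₁ ⟨x, hx⟩]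
    · intro x hx
      show φ' x = ω x
      rw [h2 ⟨x, hx⟩, hωG₂ ⟨x, hx⟩]
  have hfin : (G₁ ⊔ G₂).topologicalClosure ≤ φ'.eqLocus ω :=
    Subgroup.topologicalClosure_minimal _ hE (isClosed_eq hφ'c hωc)
  rw [hGen] at hfin
  ext x
  exact hfin (Subgroup.mem_top x)

end HNN2
/-- if the factor `A` of a `ℤ_p`-splitting of a finitely generated pro-`p`
group `G` splits as a nontrivial free pro-`p` product in which (a conjugate of) `C`
(and, in the HNN case, of `t⁻¹Ct`) is contained in a factor, then `G` splits as a
nontrivial free pro-`p` product. -/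
theorem splits_free_of_factor_splits_free
    (p : ℕ) [Fact p.Prime]
    (G : Type u) [Group G] [TopologicalSpace G] [IsTopologicalGroup G]
    (hG : IsProP p G) (hfg : TopFiniteGen G)
    (S : SplitData G) (hS : S.IsZp p)
    (hsplit : match S with
      | .amalg A _ C =>
          ∃ A₁ A₂ : Subgroup ↥A, IsAmalgFreeProdP p ↥A A₁ A₂ ⊥ ∧ A₁ ≠ ⊥ ∧ A₂ ≠ ⊥ ∧
            ∃ a : ↥A, conjSub a (C.subgroupOf A) ≤ A₁ ∨ conjSub a (C.subgroupOf A) ≤ A₂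
      | .hnn A C t =>
          ∃ A₁ A₂ : Subgroup ↥A, IsAmalgFreeProdP p ↥A A₁ A₂ ⊥ ∧ A₁ ≠ ⊥ ∧ A₂ ≠ ⊥ ∧
            (∃ a : ↥A, conjSub a (C.subgroupOf A) ≤ A₁ ∨ conjSub a (C.subgroupOf A) ≤ A₂) ∧
            (∃ a : ↥A, conjSub a ((conjSub t C).subgroupOf A) ≤ A₁ ∨
              conjSub a ((conjSub t C).subgroupOf A) ≤ A₂)) :
    ∃ G₁ G₂ : Subgroup G, IsAmalgFreeProdP p G G₁ G₂ ⊥ ∧ G₁ ≠ ⊥ ∧ G₂ ≠ ⊥ := by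
  revert hS hsplit
  cases S with
  | amalg A B C =>
    intro hS hsplit
    obtain ⟨A₁, A₂, hfree, hA₁, hA₂, a, hca⟩ := hsplit
    obtain ⟨ham, -, -, -⟩ := hS
    cases hca with
    | inl h => exact amalgCase G hG ham hfree hA₁ hA₂ h
    | inr h => exact amalgCase G hG ham (amalgSymm hfree) hA₂ hA₁ h
  | hnn A C t =>
    intro hS hsplit
    obtain ⟨A₁, A₂, hfree, hA₁, hA₂, ⟨a, hca⟩, ⟨a', hca'⟩⟩ := hsplit
    obtain ⟨hhnn, hCZp⟩ := hS
    cases hca with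
    | inl h =>
      cases hca' with
      | inl h' => exact hnnSame G hG hhnn hfree hA₁ hA₂ h h'
      | inr h' => exact hnnCross G hG hhnn hCZp hfree hA₁ hA₂ h h'
    | inr h =>
      cases hca' with
      | inl h' => exact hnnCross G hG hhnn hCZp (amalgSymm hfree) hA₂ hA₁ h h'
      | inr h' => exact hnnSame G hG hhnn (amalgSymm hfree) hA₂ hA₁ h h'
end

section
/- Let p > 2 be a prime and let N be a pro-p group containing a closed normal subgroup K with K isomorphic to ℤ_p and N/K isomorphic to ℤ_p. If N contains a nontrivial closed normal subgroup K₁ with K₁ ∩ K = 1, then N is isomorphic (as a topological group) to ℤ_p × ℤ_p. -/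
open Subgroup

universe u

open Filter Topology


open Filter Topology

section PadicAux

variable {p : ℕ} [Fact p.Prime]

lemma ZZ_dvd_of_toZMod_eq_zero {u : ℤ_[p]} (h : PadicInt.toZMod u = 0) : (p:ℤ_[p]) ∣ u := by
  rw [← Ideal.mem_span_singleton, ← PadicInt.maximalIdeal_eq_span_p, ← PadicInt.ker_toZMod]
  exact h

lemma ZZ_norm_le_inv_of_dvd {u : ℤ_[p]} (h : (p:ℤ_[p]) ∣ u) : ‖u‖ ≤ (p:ℝ)⁻¹ := by
  obtain ⟨w, rfl⟩ := h
  rw [norm_mul, PadicInt.norm_p]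
  calc (p:ℝ)⁻¹ * ‖w‖ ≤ (p:ℝ)⁻¹ * 1 := by
        apply mul_le_mul_of_nonneg_left (PadicInt.norm_le_one w) (by positivity)
    _ = (p:ℝ)⁻¹ := mul_one _

lemma ZZ_pow_p_eq_one (hp : 2 < p) (u : ℤ_[p]) (hd : (p:ℤ_[p]) ∣ (u - 1))
    (h : u ^ p = 1) : u = 1 := by
  by_contra hne
  set t : ℤ_[p] := u - 1 with ht
  have htne : t ≠ 0 := sub_ne_zero.mpr hne
  have htn : ‖t‖ ≤ (p:ℝ)⁻¹ := ZZ_norm_le_inv_of_dvd hd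
  have hu : u = t + 1 := by ring
  have hexp : (∑ i ∈ Finset.range (p+1), t ^ i * 1 ^ (p - i) * (p.choose i : ℤ_[p])) = 1 := by
    rw [← add_pow, ← hu, h]
  rw [Finset.range_eq_Ico, Finset.sum_eq_sum_Ico_succ_bot (by omega),
    Finset.sum_eq_sum_Ico_succ_bot (by omega)] at hexp
  simp only [zero_add, pow_zero, one_pow, one_mul, Nat.choose_zero_right, Nat.cast_one, mul_one,
    pow_one, Nat.choose_one_right] at hexp
  norm_num at hexp
  -- hexp : 1 + t * p + S = 1  (roughly)
  have hS : t * (p : ℤ_[p]) = -(∑ i ∈ Finset.Ico 2 (p+1), t ^ i * (p.choose i : ℤ_[p])) := by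
    linear_combination hexp
  have hterm : ∀ i ∈ Finset.Ico 2 (p+1), ‖t ^ i * (p.choose i : ℤ_[p])‖ ≤ ‖t‖^2 * (p:ℝ)⁻¹ := by
    intro i hi
    simp only [Finset.mem_Ico] at hi
    rw [norm_mul, norm_pow]
    have ht1 : ‖t‖ ≤ 1 := PadicInt.norm_le_one t
    have htnn : (0:ℝ) ≤ ‖t‖ := norm_nonneg t
    rcases lt_or_ge i p with hip | hip
    · have hdvd : (p:ℤ_[p]) ∣ (p.choose i : ℤ_[p]) := by
        obtain ⟨d, hdd⟩ := (Fact.out : p.Prime).dvd_choose_self (by omega) hip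
        exact ⟨(d : ℤ_[p]), by exact_mod_cast congrArg (Nat.cast : ℕ → ℤ_[p]) hdd⟩
      have h1 : ‖t‖ ^ i ≤ ‖t‖ ^ 2 := pow_le_pow_of_le_one htnn ht1 hi.1
      have h2 := ZZ_norm_le_inv_of_dvd hdvd
      exact mul_le_mul h1 h2 (norm_nonneg _) (by positivity)
    · have hip' : i = p := by omega
      rw [hip']
      simp only [Nat.choose_self, Nat.cast_one, norm_one, mul_one]
      have : ‖t‖ ^ p = ‖t‖ ^ 2 * ‖t‖ ^ (p - 2) := by
        rw [← pow_add]; congr 1; omega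
      rw [this]
      apply mul_le_mul_of_nonneg_left _ (by positivity)
      calc ‖t‖ ^ (p-2) ≤ ‖t‖ ^ 1 := pow_le_pow_of_le_one htnn ht1 (by omega)
        _ = ‖t‖ := pow_one _
        _ ≤ (p:ℝ)⁻¹ := htn
  have hsum : ‖t * (p:ℤ_[p])‖ ≤ (p - 1 : ℝ) * (‖t‖^2 * (p:ℝ)⁻¹) := by
    rw [hS, norm_neg]
    calc ‖∑ i ∈ Finset.Ico 2 (p+1), t ^ i * (p.choose i : ℤ_[p])‖
        ≤ ∑ i ∈ Finset.Ico 2 (p+1), ‖t ^ i * (p.choose i : ℤ_[p])‖ :=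
          norm_sum_le _ _
      _ ≤ (Finset.Ico 2 (p+1)).card • (‖t‖^2 * (p:ℝ)⁻¹) := Finset.sum_le_card_nsmul _ _ _ hterm
      _ = (p - 1 : ℝ) * (‖t‖^2 * (p:ℝ)⁻¹) := by
          rw [Nat.card_Ico, nsmul_eq_mul]
          congr 1
          have he : p + 1 - 2 = p - 1 := by omega
          rw [he, Nat.cast_sub (by omega : 1 ≤ p), Nat.cast_one]
  rw [norm_mul, PadicInt.norm_p] at hsum
  have hppos : (0:ℝ) < p := by positivity
  have htpos : (0:ℝ) < ‖t‖ := norm_pos_iff.mpr htne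
  have hpp : (p:ℝ) * (p:ℝ)⁻¹ = 1 := mul_inv_cancel₀ (ne_of_gt hppos)
  have hp2 : (2:ℝ) < p := by exact_mod_cast hp
  have h1 : ‖t‖ ≤ ((p:ℝ)-1) * ‖t‖^2 := by
    have h0 := mul_le_mul_of_nonneg_right hsum hppos.le
    calc ‖t‖ = ‖t‖ * ((p:ℝ)⁻¹ * p) := by rw [inv_mul_cancel₀ (ne_of_gt hppos), mul_one]
      _ = ‖t‖ * (p:ℝ)⁻¹ * p := by ring
      _ ≤ ((p:ℝ)-1) * (‖t‖^2 * (p:ℝ)⁻¹) * p := h0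
      _ = ((p:ℝ)-1) * ‖t‖^2 * ((p:ℝ)⁻¹ * p) := by ring
      _ = ((p:ℝ)-1) * ‖t‖^2 := by rw [inv_mul_cancel₀ (ne_of_gt hppos), mul_one]
  have h2 : 1 * ‖t‖ ≤ (((p:ℝ)-1)*‖t‖) * ‖t‖ := by
    calc 1 * ‖t‖ = ‖t‖ := one_mul _
      _ ≤ ((p:ℝ)-1)*‖t‖^2 := h1
      _ = (((p:ℝ)-1)*‖t‖)*‖t‖ := by ring
  have h3 : (1:ℝ) ≤ ((p:ℝ)-1)*‖t‖ := le_of_mul_le_mul_right h2 htpos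
  have h4 : ((p:ℝ)-1)*‖t‖ ≤ ((p:ℝ)-1)*(p:ℝ)⁻¹ := mul_le_mul_of_nonneg_left htn (by linarith)
  have h5 : ((p:ℝ)-1)*(p:ℝ)⁻¹ < 1 := by
    rw [sub_mul, hpp]
    have : (0:ℝ) < (p:ℝ)⁻¹ := by positivity
    linarith
  linarith

lemma ZZ_pow_p_pow_eq_one (hp : 2 < p) (m : ℕ) (u : ℤ_[p]) (h : u ^ (p ^ m) = 1) : u = 1 := by
  induction m generalizing u with
  | zero => simpa using h
  | succ k ih =>
    have hd : (p:ℤ_[p]) ∣ (u - 1) := by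
      apply ZZ_dvd_of_toZMod_eq_zero
      have h0 : (PadicInt.toZMod u) ^ (p ^ (k+1)) = 1 := by
        rw [← map_pow, h, map_one]
      have h1 : ∀ (j:ℕ) (a : ZMod p), a ^ (p ^ j) = a := by
        intro j a
        induction j with
        | zero => simp
        | succ l ihl => rw [pow_succ, pow_mul, ihl, ZMod.pow_card]
      rw [h1] at h0
      rw [map_sub, map_one, h0, sub_self]
    have hup : (u ^ p) ^ (p ^ k) = 1 := by
      rw [← pow_mul, ← pow_succ']
      exact h
    have := ih (u ^ p) hup
    exact ZZ_pow_p_eq_one hp u hd this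

end PadicAux


open Filter Topology

section PadicTopAux

variable {p : ℕ} [Fact p.Prime]

lemma ZZ_appr_dvd (c : ℤ_[p]) {k n : ℕ} (h : k ≤ n) : ((p:ℤ_[p]))^k ∣ (c - c.appr n) := by
  have hs := PadicInt.appr_spec n c
  rw [Ideal.mem_span_singleton] at hs
  exact dvd_trans (pow_dvd_pow _ h) hs

lemma ZZ_int_dvd_transfer (j : ℤ) (k : ℕ) (h : ((p:ℤ_[p]))^k ∣ ((j : ℤ_[p]))) :
    ((p:ℤ)^k ∣ j) := by
  have h1 : ‖((j:ℤ_[p]))‖ ≤ (p:ℝ)^(-(k:ℤ)) := by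
    rw [PadicInt.norm_le_pow_iff_mem_span_pow, Ideal.mem_span_singleton]; exact h
  rw [PadicInt.norm_int_le_pow_iff_dvd] at h1
  exact_mod_cast h1

lemma ZZ_tendsto_appr (c : ℤ_[p]) :
    Tendsto (fun n => ((c.appr n : ℤ_[p]))) atTop (𝓝 c) := by
  rw [tendsto_iff_dist_tendsto_zero]
  have hb : ∀ n, dist ((c.appr n : ℤ_[p])) c ≤ ((p:ℝ)⁻¹)^n := by
    intro n
    rw [dist_eq_norm, ← norm_neg, neg_sub]
    have := ZZ_appr_dvd c (le_refl n)
    have h1 : ‖c - c.appr n‖ ≤ (p:ℝ)^(-(n:ℤ)) := by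
      rw [PadicInt.norm_le_pow_iff_mem_span_pow, Ideal.mem_span_singleton]; exact this
    rwa [zpow_neg, zpow_natCast, ← inv_pow] at h1
  have hp1 : (1:ℝ) < p := by exact_mod_cast (Fact.out : p.Prime).one_lt
  apply squeeze_zero (fun n => dist_nonneg) hb
  apply tendsto_pow_atTop_nhds_zero_of_lt_one (by positivity)
  rw [inv_lt_one_iff₀]; right; exact hp1

/-- A closed subgroup of `Multiplicative ℤ_[p]` containing `g` contains `ofAdd (z * toAdd g)`
for every `z`. -/
lemma ZZ_closed_subgroup_smul (H : Subgroup (Multiplicative ℤ_[p]))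
    (hH : IsClosed (H : Set (Multiplicative ℤ_[p]))) {g : Multiplicative ℤ_[p]} (hg : g ∈ H)
    (z : ℤ_[p]) : Multiplicative.ofAdd (z * g.toAdd) ∈ H := by
  have hmem : ∀ n : ℕ, Multiplicative.ofAdd (((z.appr n : ℤ_[p])) * g.toAdd) ∈ H := by
    intro n
    have : Multiplicative.ofAdd (((z.appr n : ℤ_[p])) * g.toAdd) = g ^ (z.appr n) := by
      apply Multiplicative.toAdd.injective
      simp [toAdd_pow, nsmul_eq_mul]
    rw [this]
    exact pow_mem hg _
  have htend : Tendsto (fun n => Multiplicative.ofAdd (((z.appr n : ℤ_[p])) * g.toAdd)) atTop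
      (𝓝 (Multiplicative.ofAdd (z * g.toAdd))) := by
    apply Tendsto.comp (continuous_ofAdd.tendsto _)
    exact Tendsto.mul (ZZ_tendsto_appr z) tendsto_const_nhds
  exact hH.mem_of_tendsto htend (Eventually.of_forall hmem)

/-- A continuous additive self-map of `ℤ_[p]` is multiplication by its value at 1. -/
lemma ZZ_cont_add_eq_mul (f : ℤ_[p] → ℤ_[p]) (hf : Continuous f)
    (hadd : ∀ a b, f (a + b) = f a + f b) (z : ℤ_[p]) : f z = f 1 * z := by
  have h0 : f 0 = 0 := by
    have := hadd 0 0
    simpa using this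
  have hnat : ∀ n : ℕ, f ((n : ℤ_[p])) = f 1 * n := by
    intro n
    induction n with
    | zero => simpa using h0
    | succ k ih => push_cast; rw [hadd, ih]; ring
  have h1 : Tendsto (fun n => f ((z.appr n : ℤ_[p]))) atTop (𝓝 (f z)) :=
    (hf.tendsto z).comp (ZZ_tendsto_appr z)
  have h2 : Tendsto (fun n => f ((z.appr n : ℤ_[p]))) atTop (𝓝 (f 1 * z)) := by
    have : (fun n => f ((z.appr n : ℤ_[p]))) = fun n => f 1 * ((z.appr n : ℤ_[p])) := by
      funext n; exact hnat _
    rw [this]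
    exact Tendsto.mul tendsto_const_nhds (ZZ_tendsto_appr z)
  exact tendsto_nhds_unique h1 h2

end PadicTopAux


open Filter Topology

section GroupTopAux

variable {N : Type*} [Group N] [TopologicalSpace N] [IsTopologicalGroup N]

lemma ZZ_isClosed_centralizer [T2Space N] (s : Set N) :
    IsClosed ((Subgroup.centralizer s : Subgroup N) : Set N) := by
  have : ((Subgroup.centralizer s : Subgroup N) : Set N) = ⋂ g ∈ s, {x | g * x = x * g} := by
    ext x; simp [Subgroup.mem_centralizer_iff, Set.mem_iInter]
  rw [this]
  exact isClosed_biInter fun g _ => isClosed_eq (by continuity) (by continuity)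

lemma ZZ_basis [CompactSpace N] [T2Space N] [TotallyDisconnectedSpace N]
    {U : Set N} (hU : U ∈ 𝓝 1) :
    ∃ V : Subgroup N, IsOpen (V : Set N) ∧ V.Normal ∧ (V : Set N) ⊆ U := by
  obtain ⟨W, ⟨h1W, hWclopen⟩, hWU⟩ := (nhds_basis_clopen (1:N)).mem_iff.mp hU
  obtain ⟨H, hHW⟩ :=
    IsTopologicalGroup.exist_openNormalSubgroup_sub_clopen_nhds_of_one hWclopen h1W
  exact ⟨H.toSubgroup, H.toOpenSubgroup.isOpen, H.isNormal', fun x hx => hWU (hHW hx)⟩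

lemma ZZ_pow_mem {p : ℕ} [CompactSpace N]
    (hidx : ∀ U : Subgroup N, U.Normal → IsOpen (U : Set N) → ∃ n : ℕ, U.index = p ^ n)
    (V : Subgroup N) (hVn : V.Normal) (hVo : IsOpen (V : Set N)) :
    ∃ k : ℕ, ∀ j : ℤ, ((p:ℤ)^k ∣ j) → ∀ x : N, x ^ j ∈ V := by
  obtain ⟨k, hk⟩ := hidx V hVn hVo
  refine ⟨k, fun j hj x => ?_⟩
  have hpk : x ^ ((p:ℤ)^k) ∈ V := by
    have h1 : ((QuotientGroup.mk x : N ⧸ V)) ^ (p^k) = 1 := by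
      rw [← hk, Subgroup.index_eq_card]
      exact pow_card_eq_one'
    have h2 : x ^ (p^k : ℕ) ∈ V := by
      rw [← QuotientGroup.eq_one_iff]
      push_cast
      exact h1
    have : x ^ ((p:ℤ)^k) = x ^ ((p^k : ℕ) : ℤ) := by push_cast; ring_nf
    rw [this, zpow_natCast]
    exact h2
  obtain ⟨r, rfl⟩ := hj
  rw [zpow_mul]
  exact Subgroup.zpow_mem V hpk r

lemma ZZ_limswap [CompactSpace N] [T2Space N] [TotallyDisconnectedSpace N]
    {a b : ℕ → N} {y : N} (hy : Tendsto a atTop (𝓝 y))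
    (hcong : ∀ V : Subgroup N, IsOpen (V : Set N) → V.Normal →
      ∀ᶠ n in atTop, (a n)⁻¹ * b n ∈ V) :
    Tendsto b atTop (𝓝 y) := by
  rw [tendsto_nhds]
  intro s hso hys
  have hW' : (fun z => y * z) ⁻¹' s ∈ 𝓝 (1:N) := by
    apply (continuous_mul_left y).continuousAt.preimage_mem_nhds
    simpa using hso.mem_nhds hys
  obtain ⟨V, hVo, hVn, hVs⟩ := ZZ_basis hW'
  have hO : {z : N | y⁻¹ * z ∈ V} ∈ 𝓝 y := by
    apply IsOpen.mem_nhds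
    · exact hVo.preimage (continuous_mul_left y⁻¹)
    · simpa using V.one_mem
  filter_upwards [hy.eventually_mem hO, hcong V hVo hVn] with n h1 h2
  have hmem : y⁻¹ * b n ∈ V := by
    have heq : y⁻¹ * b n = (y⁻¹ * a n) * ((a n)⁻¹ * b n) := by group
    rw [heq]; exact V.mul_mem h1 h2
  show b n ∈ s
  have hbn : b n = y * (y⁻¹ * b n) := by group
  rw [hbn]
  exact hVs hmem

lemma ZZ_exists_limit [CompactSpace N] [T2Space N] [TotallyDisconnectedSpace N]
    (s : ℕ → N)
    (hs : ∀ V : Subgroup N, IsOpen (V : Set N) → V.Normal →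
      ∃ n₀, ∀ m, n₀ ≤ m → (s n₀)⁻¹ * s m ∈ V) :
    ∃ y, Tendsto s atTop (𝓝 y) := by
  obtain ⟨y, hy⟩ := exists_clusterPt_of_compactSpace (Filter.map s atTop)
  refine ⟨y, ?_⟩
  have hyc : MapClusterPt y atTop s := hy
  rw [tendsto_nhds]
  intro W hWo hyW
  have hW' : (fun z => y * z) ⁻¹' W ∈ 𝓝 (1:N) := by
    apply (continuous_mul_left y).continuousAt.preimage_mem_nhds
    simpa using hWo.mem_nhds hyW
  obtain ⟨V, hVo, hVn, hVs⟩ := ZZ_basis hW'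
  obtain ⟨n₀, hn₀⟩ := hs V hVo hVn
  have hO : {z : N | y⁻¹ * z ∈ V} ∈ 𝓝 y := by
    apply IsOpen.mem_nhds
    · exact hVo.preimage (continuous_mul_left y⁻¹)
    · simpa using V.one_mem
  have hfreq := (mapClusterPt_iff_frequently.mp hyc) _ hO
  obtain ⟨m, hmn₀, hmV⟩ := (hfreq.and_eventually (eventually_ge_atTop n₀)).exists
  -- hmn₀ : y⁻¹ * s m ∈ V, hmV : n₀ ≤ m
  have hkey : (s n₀)⁻¹ * y ∈ V := by
    have h1 : (s n₀)⁻¹ * s m ∈ V := hn₀ m hmV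
    have h2 : (s m)⁻¹ * y ∈ V := by
      have heq : (s m)⁻¹ * y = (y⁻¹ * s m)⁻¹ := by group
      rw [heq]; exact V.inv_mem hmn₀
    have heq : (s n₀)⁻¹ * y = ((s n₀)⁻¹ * s m) * ((s m)⁻¹ * y) := by group
    rw [heq]; exact V.mul_mem h1 h2
  filter_upwards [eventually_ge_atTop n₀] with n hn
  have h3 : y⁻¹ * s n ∈ V := by
    have heq : y⁻¹ * s n = ((s n₀)⁻¹ * y)⁻¹ * ((s n₀)⁻¹ * s n) := by group
    rw [heq]; exact V.mul_mem (V.inv_mem hkey) (hn₀ n hn)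
  show s n ∈ W
  have heq2 : s n = y * (y⁻¹ * s n) := by group
  rw [heq2]
  exact hVs h3

end GroupTopAux
section Central

variable {p : ℕ} [Fact p.Prime] {N : Type u} [Group N] [TopologicalSpace N]
  [IsTopologicalGroup N]

/-- The conjugation action on `K ≅ ℤ_p`, transported to `ℤ_[p]`. -/
noncomputable def ZZfc (K : Subgroup N) [K.Normal] (eK : ↥K ≃* Multiplicative ℤ_[p]) (n : N) (z : ℤ_[p]) :
    ℤ_[p] :=
  (eK ((MulAut.conjNormal n) (eK.symm (Multiplicative.ofAdd z)))).toAdd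

variable (K : Subgroup N) [K.Normal] (eK : ↥K ≃* Multiplicative ℤ_[p])

lemma ZZfc_add (n : N) (a b : ℤ_[p]) :
    ZZfc K eK n (a + b) = ZZfc K eK n a + ZZfc K eK n b := by
  simp [ZZfc, ofAdd_add, map_mul]

lemma ZZfc_cont (heKc : Continuous eK) (heKsc : Continuous eK.symm) (n : N) :
    Continuous (ZZfc K eK n) := by
  apply Continuous.comp continuous_toAdd
  apply heKc.comp
  have hval : Continuous fun k : ↥K => ((MulAut.conjNormal n) k : N) := by
    have h0 : Continuous fun k : ↥K => n * (k : N) * n⁻¹ := by continuity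
    exact h0.congr fun k => (MulAut.conjNormal_apply n k).symm
  have hc1 : Continuous fun k : ↥K => (MulAut.conjNormal (H := K) n) k :=
    continuous_induced_rng.2 hval
  exact hc1.comp (heKsc.comp continuous_ofAdd)

lemma ZZfc_comp (n m : N) (z : ℤ_[p]) :
    ZZfc K eK (n * m) z = ZZfc K eK n (ZZfc K eK m z) := by
  simp [ZZfc, map_mul, MulAut.mul_apply]

lemma ZZfc_one (z : ℤ_[p]) : ZZfc K eK 1 z = z := by
  simp [ZZfc]

lemma ZZfc_linear (heKc : Continuous eK) (heKsc : Continuous eK.symm) (n : N) (z : ℤ_[p]) :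
    ZZfc K eK n z = ZZfc K eK n 1 * z :=
  ZZ_cont_add_eq_mul _ (ZZfc_cont K eK heKc heKsc n) (ZZfc_add K eK n) z

lemma ZZfc_of_centralizes (n : N) (hn : ∀ k ∈ K, n * k = k * n) (z : ℤ_[p]) :
    ZZfc K eK n z = z := by
  have h1 : (MulAut.conjNormal (H := K) n) (eK.symm (Multiplicative.ofAdd z)) =
      eK.symm (Multiplicative.ofAdd z) := by
    apply Subtype.ext
    rw [MulAut.conjNormal_apply]
    set k := ((eK.symm (Multiplicative.ofAdd z) : ↥K) : N)
    have hk : k ∈ K := SetLike.coe_mem _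
    rw [hn k hk, mul_assoc, mul_inv_cancel, mul_one]
  rw [ZZfc, h1]
  simp

lemma ZZfc_centralizes_of_id (n : N) (hfc : ∀ z, ZZfc K eK n z = z) :
    ∀ k ∈ K, n * k = k * n := by
  intro k hk
  have h1 := hfc ((eK ⟨k, hk⟩).toAdd)
  rw [ZZfc] at h1
  rw [ofAdd_toAdd, MulEquiv.symm_apply_apply] at h1
  have h2 : eK ((MulAut.conjNormal n) ⟨k, hk⟩) = eK ⟨k, hk⟩ := by
    apply Multiplicative.toAdd.injective
    rw [h1]
  have h3 := eK.injective h2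
  have h4 : n * k * n⁻¹ = k := by
    have := congrArg (Subtype.val) h3
    rwa [MulAut.conjNormal_apply] at this
  calc n * k = n * k * n⁻¹ * n := by group
    _ = k * n := by rw [h4]

/-- Centrality of `K` in `N`. -/
lemma ZZ_central (hp : 2 < p)
    [CompactSpace N] [T2Space N]
    (hidx : ∀ U : Subgroup N, U.Normal → IsOpen (U : Set N) → ∃ n : ℕ, U.index = p ^ n)
    (hKcl : IsClosed (K : Set N))
    (heKc : Continuous eK) (heKsc : Continuous eK.symm)
    (eQ : (N ⧸ K) ≃* Multiplicative ℤ_[p]) (heQsc : Continuous eQ.symm)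
    (K₁ : Subgroup N) (hK₁n : K₁.Normal) (hK₁ne : K₁ ≠ ⊥) (hdisj : K₁ ⊓ K = ⊥) :
    ∀ (n k : N), k ∈ K → n * k = k * n := by
  have hKn : K.Normal := inferInstance
  set q := QuotientGroup.mk' K with hq
  have hqc : Continuous q := continuous_quotient_mk'
  set C := Subgroup.centralizer (K : Set N) with hC
  have habK : ∀ a b : ↥K, a * b = b * a := fun a b => eK.injective (by
    rw [map_mul, map_mul, mul_comm])
  have hKC : K ≤ C := by
    intro k hk
    rw [hC, Subgroup.mem_centralizer_iff]
    intro g hg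
    have := habK ⟨g, hg⟩ ⟨k, hk⟩
    exact congrArg Subtype.val this
  -- a nontrivial element of K₁
  obtain ⟨x, hxK₁, hx1⟩ : ∃ x ∈ K₁, x ≠ (1:N) := by
    by_contra hc; push_neg at hc
    exact hK₁ne (Subgroup.eq_bot_iff_forall K₁ |>.mpr hc)
  have hxc : ∀ g ∈ K, g * x = x * g := by
    intro g hg
    have hc1 : x * g * x⁻¹ * g⁻¹ ∈ K₁ := by
      have h1 : g * x⁻¹ * g⁻¹ ∈ K₁ := hK₁n.conj_mem _ (K₁.inv_mem hxK₁) g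
      have h2 := K₁.mul_mem hxK₁ h1
      rwa [← mul_assoc, ← mul_assoc] at h2
    have hc2 : x * g * x⁻¹ * g⁻¹ ∈ K := by
      have h1 : x * g * x⁻¹ ∈ K := hKn.conj_mem _ hg x
      exact K.mul_mem h1 (K.inv_mem hg)
    have hbot : x * g * x⁻¹ * g⁻¹ ∈ K₁ ⊓ K := Subgroup.mem_inf.mpr ⟨hc1, hc2⟩
    rw [hdisj, Subgroup.mem_bot] at hbot
    have h3 : (x*g) * (g*x)⁻¹ = 1 := by
      rw [show (x*g)*(g*x)⁻¹ = x*g*x⁻¹*g⁻¹ from by group]; exact hbot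
    exact (mul_inv_eq_one.mp h3).symm
  have hxC : x ∈ C := Subgroup.mem_centralizer_iff.mpr hxc
  have hCc : IsClosed (C : Set N) := ZZ_isClosed_centralizer _
  set Cq : Subgroup (N ⧸ K) := Subgroup.map q C with hCq
  have hCqc : IsClosed (Cq : Set (N ⧸ K)) := by
    have he : (Cq : Set (N ⧸ K)) = ⇑q '' (C : Set N) := Subgroup.coe_map _ _
    rw [he]
    exact (hCc.isCompact.image hqc).isClosed
  set H : Subgroup (Multiplicative ℤ_[p]) := Subgroup.map eQ.toMonoidHom Cq with hH
  have hHc : IsClosed (H : Set (Multiplicative ℤ_[p])) := by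
    have he : (H : Set (Multiplicative ℤ_[p])) = ⇑eQ.symm ⁻¹' (Cq : Set (N ⧸ K)) := by
      ext z
      rw [Set.mem_preimage, SetLike.mem_coe, SetLike.mem_coe, hH, Subgroup.mem_map_equiv]
    rw [he]
    exact hCqc.preimage heQsc
  have hqx1 : q x ≠ 1 := by
    intro h
    have hxK : x ∈ K := (QuotientGroup.eq_one_iff x).mp h
    have : x ∈ K₁ ⊓ K := Subgroup.mem_inf.mpr ⟨hxK₁, hxK⟩
    rw [hdisj, Subgroup.mem_bot] at this
    exact hx1 this
  set g₀ := eQ (q x) with hg₀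
  have hg₀H : g₀ ∈ H := ⟨q x, ⟨x, hxC, rfl⟩, rfl⟩
  have hg₀1 : g₀ ≠ 1 := by
    intro h
    exact hqx1 (eQ.injective (by rw [← hg₀, h, map_one]))
  set c₀ := g₀.toAdd with hc₀def
  have hc₀ : c₀ ≠ 0 := by
    intro h
    apply hg₀1
    have : g₀ = Multiplicative.ofAdd c₀ := rfl
    rw [this, h]; rfl
  set m := c₀.valuation with hm
  obtain ⟨w, hw⟩ : c₀ ∣ (p:ℤ_[p]) ^ m := by
    refine ⟨(((PadicInt.unitCoeff hc₀)⁻¹ : ℤ_[p]ˣ) : ℤ_[p]), ?_⟩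
    have hspec : c₀ = (PadicInt.unitCoeff hc₀ : ℤ_[p]) * (p:ℤ_[p]) ^ m :=
      PadicInt.unitCoeff_spec hc₀
    have huinv : (PadicInt.unitCoeff hc₀ : ℤ_[p]) *
        (((PadicInt.unitCoeff hc₀)⁻¹ : ℤ_[p]ˣ) : ℤ_[p]) = 1 := Units.mul_inv _
    linear_combination (-(((PadicInt.unitCoeff hc₀)⁻¹ : ℤ_[p]ˣ) : ℤ_[p])) * hspec -
      ((p:ℤ_[p]) ^ m) * huinv
  have hCpow : ∀ n : N, n ^ (p ^ m) ∈ C := by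
    intro n
    set z := (eQ (q n)).toAdd with hz
    have hmem : Multiplicative.ofAdd ((z * w) * c₀) ∈ H :=
      ZZ_closed_subgroup_smul H hHc hg₀H (z * w)
    have heq : eQ (q (n ^ (p ^ m))) = Multiplicative.ofAdd ((z * w) * c₀) := by
      have h1 : q (n ^ (p ^ m)) = (q n) ^ (p ^ m) := map_pow q n _
      rw [h1, map_pow]
      apply Multiplicative.toAdd.injective
      rw [toAdd_pow, toAdd_ofAdd, nsmul_eq_mul, ← hz]
      push_cast
      linear_combination z * hw
    have hqm : q (n ^ (p ^ m)) ∈ Cq := by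
      have : eQ (q (n ^ (p ^ m))) ∈ H := heq ▸ hmem
      rw [hH, Subgroup.mem_map_equiv, MulEquiv.symm_apply_apply] at this
      exact this
    obtain ⟨c', hc'C, hc'q⟩ := hqm
    have hker : c'⁻¹ * n ^ (p ^ m) ∈ K := by
      have : (c' : N ⧸ K) = (n ^ (p ^ m) : N ⧸ K) := hc'q
      exact QuotientGroup.eq.mp this
    have : n ^ (p ^ m) = c' * (c'⁻¹ * n ^ (p ^ m)) := by group
    rw [this]
    exact C.mul_mem hc'C (hKC hker)
  -- conclude
  intro n k hk
  have hu : (ZZfc K eK n 1) ^ (p ^ m) = 1 := by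
    have hj : ∀ j : ℕ, ZZfc K eK (n ^ j) 1 = (ZZfc K eK n 1) ^ j := by
      intro j
      induction j with
      | zero => simpa using ZZfc_one K eK 1
      | succ i ih =>
        rw [pow_succ, ZZfc_comp K eK, ZZfc_linear K eK heKc heKsc, ih]
        ring
    have hcent : ∀ z, ZZfc K eK (n ^ (p ^ m)) z = z := by
      apply ZZfc_of_centralizes
      intro g hg
      have := Subgroup.mem_centralizer_iff.mp (hCpow n) g hg
      exact this.symm
    rw [← hj, hcent 1]
  have hu1 : ZZfc K eK n 1 = 1 := ZZ_pow_p_pow_eq_one hp m _ hu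
  have hid : ∀ z, ZZfc K eK n z = z := by
    intro z
    rw [ZZfc_linear K eK heKc heKsc, hu1, one_mul]
  exact ZZfc_centralizes_of_id K eK n hid k hk

end Central
section Abelian

variable {p : ℕ} [Fact p.Prime] {N : Type u} [Group N] [TopologicalSpace N]
  [IsTopologicalGroup N]

/-- A closed subgroup containing `K` and mapping onto a topological generator
of `N ⧸ K ≅ ℤ_p` is everything. -/
lemma ZZ_top_of_closed [CompactSpace N] (K : Subgroup N) [K.Normal]
    (hKcl : IsClosed (K : Set N))
    (eQ : (N ⧸ K) ≃* Multiplicative ℤ_[p]) (heQsc : Continuous eQ.symm)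
    {n₀ : N} (hn₀ : eQ (QuotientGroup.mk' K n₀) = Multiplicative.ofAdd 1)
    (S : Subgroup N) (hScl : IsClosed (S : Set N)) (hKS : K ≤ S) (hn₀S : n₀ ∈ S) :
    S = ⊤ := by
  set q := QuotientGroup.mk' K with hq
  have hqc : Continuous q := continuous_quotient_mk'
  set Sq : Subgroup (N ⧸ K) := Subgroup.map q S with hSq
  have hSqc : IsClosed (Sq : Set (N ⧸ K)) := by
    have he : (Sq : Set (N ⧸ K)) = ⇑q '' (S : Set N) := Subgroup.coe_map _ _
    rw [he]
    exact (hScl.isCompact.image hqc).isClosed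
  set H : Subgroup (Multiplicative ℤ_[p]) := Subgroup.map eQ.toMonoidHom Sq with hH
  have hHc : IsClosed (H : Set (Multiplicative ℤ_[p])) := by
    have he : (H : Set (Multiplicative ℤ_[p])) = ⇑eQ.symm ⁻¹' (Sq : Set (N ⧸ K)) := by
      ext z
      rw [Set.mem_preimage, SetLike.mem_coe, SetLike.mem_coe, hH, Subgroup.mem_map_equiv]
    rw [he]
    exact hSqc.preimage heQsc
  have hgH : Multiplicative.ofAdd (1:ℤ_[p]) ∈ H := ⟨q n₀, ⟨n₀, hn₀S, rfl⟩, hn₀⟩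
  rw [Subgroup.eq_top_iff']
  intro y
  have hyH : eQ (q y) ∈ H := by
    have h1 := ZZ_closed_subgroup_smul H hHc hgH ((eQ (q y)).toAdd)
    rw [toAdd_ofAdd, mul_one, ofAdd_toAdd] at h1
    exact h1
  have hyS : q y ∈ Sq := by
    rw [hH, Subgroup.mem_map_equiv, MulEquiv.symm_apply_apply] at hyH
    exact hyH
  obtain ⟨s', hs'S, hs'q⟩ := hyS
  have hker : s'⁻¹ * y ∈ K := by
    have : (s' : N ⧸ K) = (y : N ⧸ K) := hs'q
    exact QuotientGroup.eq.mp this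
  have : y = s' * (s'⁻¹ * y) := by group
  rw [this]
  exact S.mul_mem hs'S (hKS hker)

lemma ZZ_abelian (hp : 2 < p) [CompactSpace N] [T2Space N]
    (hidx : ∀ U : Subgroup N, U.Normal → IsOpen (U : Set N) → ∃ n : ℕ, U.index = p ^ n)
    (K : Subgroup N) [K.Normal] (hKcl : IsClosed (K : Set N))
    (eK : ↥K ≃* Multiplicative ℤ_[p]) (heKc : Continuous eK) (heKsc : Continuous eK.symm)
    (eQ : (N ⧸ K) ≃* Multiplicative ℤ_[p]) (heQsc : Continuous eQ.symm)
    (K₁ : Subgroup N) (hK₁n : K₁.Normal) (hK₁ne : K₁ ≠ ⊥) (hdisj : K₁ ⊓ K = ⊥)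
    {n₀ : N} (hn₀ : eQ (QuotientGroup.mk' K n₀) = Multiplicative.ofAdd 1) :
    ∀ a b : N, a * b = b * a := by
  have hcent : ∀ (n k : N), k ∈ K → n * k = k * n :=
    ZZ_central K eK hp hidx hKcl heKc heKsc eQ heQsc K₁ hK₁n hK₁ne hdisj
  have habK : ∀ a b : ↥K, a * b = b * a := fun a b => eK.injective (by
    rw [map_mul, map_mul, mul_comm])
  have hKle : ∀ z : N, K ≤ Subgroup.centralizer {z} → z = z := fun _ _ => rfl
  -- n₀ is central
  have hS₁ : Subgroup.centralizer {n₀} = ⊤ := by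
    apply ZZ_top_of_closed K hKcl eQ heQsc hn₀
    · exact ZZ_isClosed_centralizer _
    · intro k hk
      rw [Subgroup.mem_centralizer_iff]
      intro g hg
      rw [Set.mem_singleton_iff] at hg
      rw [hg]
      exact hcent n₀ k hk
    · rw [Subgroup.mem_centralizer_iff]
      intro g hg
      rw [Set.mem_singleton_iff] at hg
      rw [hg]
  have hn₀cent : ∀ y : N, n₀ * y = y * n₀ := by
    intro y
    have hy : y ∈ Subgroup.centralizer {n₀} := hS₁ ▸ Subgroup.mem_top y
    exact Subgroup.mem_centralizer_iff.mp hy n₀ rfl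
  -- every element of K is central
  have hKcent : ∀ k ∈ K, ∀ y : N, k * y = y * k := by
    intro k hk
    have hSk : Subgroup.centralizer {k} = ⊤ := by
      apply ZZ_top_of_closed K hKcl eQ heQsc hn₀
      · exact ZZ_isClosed_centralizer _
      · intro k' hk'
        rw [Subgroup.mem_centralizer_iff]
        intro g hg
        rw [Set.mem_singleton_iff] at hg
        rw [hg]
        have := habK ⟨k, hk⟩ ⟨k', hk'⟩
        exact congrArg Subtype.val this
      · rw [Subgroup.mem_centralizer_iff]
        intro g hg
        rw [Set.mem_singleton_iff] at hg
        rw [hg]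
        exact (hcent n₀ k hk).symm
    intro y
    have hy : y ∈ Subgroup.centralizer {k} := hSk ▸ Subgroup.mem_top y
    exact Subgroup.mem_centralizer_iff.mp hy k rfl
  -- the center is everything
  have hZ : Subgroup.center N = ⊤ := by
    rw [← Subgroup.centralizer_univ]
    apply ZZ_top_of_closed K hKcl eQ heQsc hn₀
    · exact ZZ_isClosed_centralizer _
    · intro k hk
      rw [Subgroup.mem_centralizer_iff]
      intro g _
      exact (hKcent k hk g).symm
    · rw [Subgroup.mem_centralizer_iff]
      intro g _
      exact (hn₀cent g).symm
  intro a b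
  have ha : a ∈ Subgroup.center N := hZ ▸ Subgroup.mem_top a
  exact (Subgroup.mem_center_iff.mp ha b).symm

end Abelian


/-- for `p > 2`, a pro-`p` group `N` which is an extension of `ℤ_p` by `ℤ_p`
and has a nontrivial closed normal subgroup meeting the kernel trivially is
isomorphic to `ℤ_p × ℤ_p`. -/
theorem extension_is_abelian_of_odd
    (p : ℕ) [Fact p.Prime] (hp : 2 < p)
    (N : Type u) [Group N] [TopologicalSpace N] [IsTopologicalGroup N] (hN : IsProP p N)
    (K : Subgroup N) [K.Normal] (hKcl : IsClosed (K : Set N)) (hK : IsTopIsoZp p ↥K)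
    (hQ : IsTopIsoZp p (N ⧸ K))
    (K₁ : Subgroup N) (hK₁cl : IsClosed (K₁ : Set N)) (hK₁n : K₁.Normal)
    (hK₁ne : K₁ ≠ ⊥) (hdisj : K₁ ⊓ K = ⊥) :
    IsTopIsoZpxZp p N := by
  obtain ⟨hcomp, ht2, htd, hidx⟩ := hN
  obtain ⟨eK, heKc, heKsc⟩ := hK
  obtain ⟨eQ, heQc, heQsc⟩ := hQ
  set q := QuotientGroup.mk' K with hqdef
  have hqc : Continuous q := continuous_quotient_mk'
  obtain ⟨n₀, hn₀q⟩ := QuotientGroup.mk'_surjective K (eQ.symm (Multiplicative.ofAdd 1))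
  have hn₀ : eQ (q n₀) = Multiplicative.ofAdd 1 := by
    rw [hqdef, hn₀q, MulEquiv.apply_symm_apply]
  have hcomm : ∀ a b : N, a * b = b * a :=
    ZZ_abelian hp hidx K hKcl eK heKc heKsc eQ heQsc K₁ hK₁n hK₁ne hdisj hn₀
  -- membership of power differences in open normal subgroups
  have hVmem : ∀ (V : Subgroup N) (k : ℕ), (∀ j : ℤ, ((p:ℤ)^k ∣ j) → ∀ x : N, x ^ j ∈ V) →
      ∀ (x : N) (a b : ℕ), ((p:ℤ_[p])^k ∣ ((a:ℤ_[p]) - (b:ℤ_[p]))) →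
      (x ^ b)⁻¹ * x ^ a ∈ V := by
    intro V k hk x a b hdvd
    have h1 : (x ^ b)⁻¹ * x ^ a = x ^ ((a:ℤ) - (b:ℤ)) := by group
    rw [h1]
    apply hk
    apply ZZ_int_dvd_transfer
    push_cast
    exact hdvd
  -- existence of limits of p-adic power sequences
  have hex : ∀ (x : N) (c : ℤ_[p]),
      ∃ y, Filter.Tendsto (fun n => x ^ (c.appr n)) Filter.atTop (𝓝 y) := by
    intro x c
    apply ZZ_exists_limit
    intro V hVo hVn
    obtain ⟨k, hk⟩ := ZZ_pow_mem hidx V hVn hVo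
    refine ⟨k, fun mm hmm => hVmem V k hk x _ _ ?_⟩
    have d1 := ZZ_appr_dvd c (le_refl k)
    have d2 := ZZ_appr_dvd c hmm
    have he : ((c.appr mm : ℤ_[p])) - ((c.appr k : ℤ_[p])) =
        (c - c.appr k) - (c - c.appr mm) := by ring
    rw [he]
    exact dvd_sub d1 d2
  choose pad hpad using hex
  -- pad is additive-to-multiplicative
  have hmul : ∀ (x : N) (c d : ℤ_[p]), pad x (c + d) = pad x c * pad x d := by
    intro x c d
    have ha : Filter.Tendsto (fun n => x ^ (c.appr n) * x ^ (d.appr n)) Filter.atTop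
        (𝓝 (pad x c * pad x d)) := (hpad x c).mul (hpad x d)
    have ha' : Filter.Tendsto (fun n => x ^ (c.appr n + d.appr n)) Filter.atTop
        (𝓝 (pad x c * pad x d)) := by simpa [pow_add] using ha
    have hb : Filter.Tendsto (fun n => x ^ ((c+d).appr n)) Filter.atTop
        (𝓝 (pad x c * pad x d)) := by
      apply ZZ_limswap ha'
      intro V hVo hVn
      obtain ⟨k, hk⟩ := ZZ_pow_mem hidx V hVn hVo
      filter_upwards [Filter.eventually_ge_atTop k] with n hn
      apply hVmem V k hk
      have d1 := ZZ_appr_dvd c hn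
      have d2 := ZZ_appr_dvd d hn
      have d3 := ZZ_appr_dvd (c+d) hn
      have he : (((c+d).appr n : ℤ_[p])) - ((c.appr n + d.appr n : ℕ) : ℤ_[p]) =
          ((c - c.appr n) + (d - d.appr n)) - ((c+d) - (c+d).appr n) := by push_cast; ring
      rw [he]
      exact dvd_sub (dvd_add d1 d2) d3
    exact tendsto_nhds_unique (hpad x (c+d)) hb
  -- compatibility with the quotient map
  have hq_pad : ∀ c : ℤ_[p], q (pad n₀ c) = eQ.symm (Multiplicative.ofAdd c) := by
    intro c
    have h1 : Filter.Tendsto (fun n => q (n₀ ^ (c.appr n))) Filter.atTop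
        (𝓝 (q (pad n₀ c))) := (hqc.tendsto _).comp (hpad n₀ c)
    have he : ∀ n : ℕ, q (n₀ ^ (c.appr n)) =
        eQ.symm (Multiplicative.ofAdd ((c.appr n : ℤ_[p]))) := by
      intro n
      rw [map_pow]
      rw [hqdef, hn₀q, ← map_pow]
      congr 1
      apply Multiplicative.toAdd.injective
      simp [toAdd_pow, nsmul_eq_mul]
    have h2 : Filter.Tendsto (fun n => q (n₀ ^ (c.appr n))) Filter.atTop
        (𝓝 (eQ.symm (Multiplicative.ofAdd c))) := by
      have h3 : Filter.Tendsto
          (fun n => eQ.symm (Multiplicative.ofAdd ((c.appr n : ℤ_[p])))) Filter.atTop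
          (𝓝 (eQ.symm (Multiplicative.ofAdd c))) :=
        (heQsc.tendsto _).comp ((continuous_ofAdd.tendsto _).comp (ZZ_tendsto_appr c))
      exact h3.congr (fun n => (he n).symm)
    exact tendsto_nhds_unique h1 h2
  -- continuity of c ↦ pad n₀ c
  have hσc : Continuous fun c : ℤ_[p] => pad n₀ c := by
    rw [continuous_iff_continuousAt]
    intro c₀
    rw [ContinuousAt, tendsto_nhds]
    intro W hWo hWmem
    have hW' : (fun z => pad n₀ c₀ * z) ⁻¹' W ∈ 𝓝 (1:N) := by
      apply (continuous_mul_left _).continuousAt.preimage_mem_nhds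
      simpa using hWo.mem_nhds hWmem
    obtain ⟨V, hVo, hVn, hVs⟩ := ZZ_basis hW'
    obtain ⟨k, hk⟩ := ZZ_pow_mem hidx V hVn hVo
    have hball : Metric.closedBall c₀ ((p:ℝ)⁻¹ ^ k) ∈ 𝓝 c₀ :=
      Metric.closedBall_mem_nhds _ (by positivity)
    filter_upwards [hball] with c hc
    show pad n₀ c ∈ W
    have hcc₀ : ((p:ℤ_[p]))^k ∣ (c - c₀) := by
      rw [Metric.mem_closedBall, dist_eq_norm] at hc
      have h4 : ‖c - c₀‖ ≤ (p:ℝ)^(-(k:ℤ)) := by rwa [zpow_neg, zpow_natCast, ← inv_pow]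
      rw [PadicInt.norm_le_pow_iff_mem_span_pow, Ideal.mem_span_singleton] at h4
      exact h4
    have hVcl : IsClosed (V : Set N) := Subgroup.isClosed_of_isOpen V hVo
    have hmem : (pad n₀ c₀)⁻¹ * pad n₀ c ∈ V := by
      have hcl2 : IsClosed {z : N | (pad n₀ c₀)⁻¹ * z ∈ V} :=
        hVcl.preimage (continuous_mul_left _)
      have hmt : pad n₀ c ∈ {z : N | (pad n₀ c₀)⁻¹ * z ∈ V} := by
        apply hcl2.mem_of_tendsto (hpad n₀ c)
        have hO : {z : N | (pad n₀ c₀)⁻¹ * z ∈ V} ∈ 𝓝 (pad n₀ c₀) := by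
          apply IsOpen.mem_nhds (hVo.preimage (continuous_mul_left _))
          simpa using V.one_mem
        filter_upwards [(hpad n₀ c₀).eventually_mem hO, Filter.eventually_ge_atTop k]
          with n h1 h2
        show (pad n₀ c₀)⁻¹ * n₀ ^ (c.appr n) ∈ V
        have h3 : (n₀ ^ (c₀.appr n))⁻¹ * n₀ ^ (c.appr n) ∈ V := by
          apply hVmem V k hk
          have d1 := ZZ_appr_dvd c h2
          have d2 := ZZ_appr_dvd c₀ h2
          have he : ((c.appr n : ℤ_[p])) - ((c₀.appr n : ℤ_[p])) =
              ((c - c₀) + (c₀ - c₀.appr n)) - (c - c.appr n) := by ring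
          rw [he]
          exact dvd_sub (dvd_add hcc₀ d2) d1
        have heq : (pad n₀ c₀)⁻¹ * n₀ ^ (c.appr n) =
            ((pad n₀ c₀)⁻¹ * n₀ ^ (c₀.appr n)) * ((n₀ ^ (c₀.appr n))⁻¹ * n₀ ^ (c.appr n)) := by
          group
        rw [heq]
        exact V.mul_mem h1 h3
      exact hmt
    have he2 : pad n₀ c = pad n₀ c₀ * ((pad n₀ c₀)⁻¹ * pad n₀ c) := by group
    rw [he2]
    exact hVs hmem
  have hσ0 : pad n₀ 0 = 1 := by
    have h0 := hmul n₀ 0 0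
    rw [add_zero] at h0
    exact mul_eq_left.mp h0.symm
  -- the equivalence
  have hswap : ∀ w x y z : N, (w*x)*(y*z) = (w*y)*(x*z) := by
    intro w x y z
    rw [mul_assoc, ← mul_assoc x, hcomm x y, mul_assoc y, ← mul_assoc]
  set ψf : Multiplicative ℤ_[p] × Multiplicative ℤ_[p] → N :=
    fun ab => ((eK.symm ab.1 : ↥K) : N) * pad n₀ (ab.2.toAdd) with hψf
  have hψmul : ∀ ab cd, ψf (ab * cd) = ψf ab * ψf cd := by
    rintro ⟨a, b⟩ ⟨c, d⟩
    show ((eK.symm (a * c) : ↥K) : N) * pad n₀ ((b * d).toAdd) = _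
    rw [map_mul, MulMemClass.coe_mul, toAdd_mul, hmul]
    exact hswap _ _ _ _
  set ψ : Multiplicative ℤ_[p] × Multiplicative ℤ_[p] →* N := MonoidHom.mk' ψf hψmul with hψ
  have hψc : Continuous ψf := by
    apply Continuous.mul
    · exact continuous_subtype_val.comp (heKsc.comp continuous_fst)
    · exact hσc.comp (continuous_toAdd.comp continuous_snd)
  have hinj : Function.Injective ψ := by
    rw [injective_iff_map_eq_one]
    rintro ⟨a, b⟩ hab
    have hab' : ((eK.symm a : ↥K) : N) * pad n₀ (b.toAdd) = 1 := hab
    have h1 : q (((eK.symm a : ↥K)) : N) = 1 :=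
      (QuotientGroup.eq_one_iff _).mpr (SetLike.coe_mem _)
    have h2 : q (((eK.symm a : ↥K) : N) * pad n₀ (b.toAdd)) = 1 := by rw [hab', map_one]
    rw [map_mul, h1, one_mul, hq_pad] at h2
    have hb1 : b = 1 := by
      have h3 : Multiplicative.ofAdd b.toAdd = 1 := eQ.symm.injective (by rw [h2, map_one])
      rwa [ofAdd_toAdd] at h3
    rw [hb1] at hab'
    rw [toAdd_one, hσ0, mul_one] at hab'
    have ha1 : eK.symm a = 1 := by exact_mod_cast hab'
    have ha2 : a = 1 := by
      have := congrArg eK ha1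
      rwa [MulEquiv.apply_symm_apply, map_one] at this
    rw [ha2, hb1]
    rfl
  have hsurj : Function.Surjective ψ := by
    intro y
    have hKmem : (pad n₀ ((eQ (q y)).toAdd))⁻¹ * y ∈ K := by
      apply (QuotientGroup.eq_one_iff _).mp
      show q ((pad n₀ ((eQ (q y)).toAdd))⁻¹ * y) = 1
      rw [map_mul, map_inv, hq_pad, ofAdd_toAdd, MulEquiv.symm_apply_apply, inv_mul_cancel]
    refine ⟨(eK ⟨(pad n₀ ((eQ (q y)).toAdd))⁻¹ * y, hKmem⟩, eQ (q y)), ?_⟩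
    show ((eK.symm (eK ⟨(pad n₀ ((eQ (q y)).toAdd))⁻¹ * y, hKmem⟩) : ↥K) : N) *
      pad n₀ ((eQ (q y)).toAdd) = y
    rw [MulEquiv.symm_apply_apply]
    show ((pad n₀ ((eQ (q y)).toAdd))⁻¹ * y) * pad n₀ ((eQ (q y)).toAdd) = y
    rw [mul_assoc, hcomm y (pad n₀ ((eQ (q y)).toAdd)), ← mul_assoc, inv_mul_cancel, one_mul]
  set e' := MulEquiv.ofBijective ψ ⟨hinj, hsurj⟩ with he'
  haveI : CompactSpace (Multiplicative ℤ_[p]) := inferInstanceAs (CompactSpace ℤ_[p])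
  have hψclosed : IsClosedMap ψf := hψc.isClosedMap
  have hcontsymm : Continuous ⇑e'.symm := by
    rw [continuous_iff_isClosed]
    intro s hs
    have himg : ⇑e'.symm ⁻¹' s = ψf '' s := by
      ext y
      constructor
      · intro hy
        exact ⟨e'.symm y, hy, by
          have h0 : ψf (e'.symm y) = e' (e'.symm y) := rfl
          rw [h0, MulEquiv.apply_symm_apply]⟩
      · rintro ⟨x, hxs, rfl⟩
        have h1 : e'.symm (ψf x) = x := by
          have h0 : ψf x = e' x := rfl
          rw [h0, MulEquiv.symm_apply_apply]
        simpa [Set.mem_preimage, h1] using hxs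
    rw [himg]
    exact hψclosed s hs
  refine ⟨e'.symm, hcontsymm, ?_⟩
  show Continuous ⇑e'.symm.symm
  rw [MulEquiv.symm_symm]
  exact hψc
end

section
/- Let N be a pro-2 group containing a closed normal subgroup K with K isomorphic to ℤ₂ and N/K isomorphic to ℤ₂. If N contains a closed normal subgroup K₁ isomorphic to ℤ₂ with K₁ ∩ K = 1, then N is isomorphic (as a topological group) either to ℤ₂ × ℤ₂ or to the pro-2 Klein bottle. -/
open Subgroup

universe u

open Multiplicative

local notation "M2" => Multiplicative ℤ_[2]

lemma aux_denseRange : DenseRange (fun m : ℤ => (ofAdd (m : ℤ_[2]) : M2)) :=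
  PadicInt.denseRange_intCast

lemma aux_ofAdd_int (m : ℤ) : (ofAdd ((m : ℤ_[2])) : M2) = (ofAdd (1 : ℤ_[2])) ^ m := by
  rw [← ofAdd_zsmul, zsmul_eq_mul, mul_one]

lemma aux_hom_ext {G : Type*} [Group G] [TopologicalSpace G] [T2Space G]
    {f g : M2 →* G} (hf : Continuous f) (hg : Continuous g)
    (h : f (ofAdd 1) = g (ofAdd 1)) : ∀ x, f x = g x := by
  have := aux_denseRange.equalizer hf hg (by
    funext m
    simp only [Function.comp_apply, aux_ofAdd_int, map_zpow, h])
  intro x; exact congrFun this x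

lemma aux_unit_sub_one_even {w : ℤ_[2]} (hw : IsUnit w) : (2 : ℤ_[2]) ∣ w - 1 := by
  have h2 : (2 : ℤ_[2]) ∣ w * (w - 1) := by
    have : (PadicInt.toZMod (w * (w - 1))) = 0 := by
      rw [map_mul, map_sub, map_one]
      generalize (PadicInt.toZMod w) = z
      revert z; decide
    have hker : w * (w - 1) ∈ RingHom.ker (PadicInt.toZMod (p := 2)) := this
    rw [PadicInt.ker_toZMod, PadicInt.maximalIdeal_eq_span_p,
      Ideal.mem_span_singleton] at hker
    exact_mod_cast hker
  rcases (PadicInt.prime_p (p := 2)).dvd_mul.mp (by exact_mod_cast h2) with h | h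
  · exact absurd (isUnit_of_dvd_unit h hw) (PadicInt.prime_p (p := 2)).not_unit
  · exact_mod_cast h

lemma aux_torsion : ∀ (n : ℕ) (w : ℤ_[2]), w ^ (2 ^ n) = 1 → w = 1 ∨ w = -1 := by
  intro n
  induction n with
  | zero => intro w hw; left; simpa using hw
  | succ n ih =>
    intro w hw
    have hsq : (w * w) ^ (2 ^ n) = 1 := by
      calc (w * w) ^ (2 ^ n) = w ^ (2 ^ n) * w ^ (2 ^ n) := mul_pow _ _ _
        _ = w ^ (2 ^ n + 2 ^ n) := (pow_add _ _ _).symm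
        _ = w ^ (2 ^ (n + 1)) := by norm_num; ring_nf
        _ = 1 := hw
    rcases ih (w * w) hsq with h | h
    · have : (w - 1) * (w + 1) = 0 := by linear_combination h
      rcases mul_eq_zero.mp this with h1 | h1
      · left; exact sub_eq_zero.mp h1
      · right; exact eq_neg_of_add_eq_zero_left h1
    · exfalso
      have hu : IsUnit w := IsUnit.of_mul_eq_one (-w) (by rw [mul_neg, h, neg_neg])
      obtain ⟨y, hy⟩ := aux_unit_sub_one_even hu
      have h4 : (2 : ℤ_[2]) * (2 * (y + y * y)) = 2 * (-1) := by
        linear_combination h - (w + 1 + 2 * y) * hy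
      have h2 : (2 : ℤ_[2]) * (y + y * y) = -1 :=
        mul_left_cancel₀ (two_ne_zero) h4
      have : IsUnit (2 : ℤ_[2]) :=
        isUnit_of_dvd_unit ⟨y + y * y, h2.symm⟩ (IsUnit.neg isUnit_one)
      exact (PadicInt.prime_p (p := 2)).not_unit (by exact_mod_cast this)


/-- Conjugation by `n` as a monoid hom of a normal subgroup. -/
def conjHom {G : Type u} [Group G] (K : Subgroup G) [hn : K.Normal] (n : G) : ↥K →* ↥K where
  toFun k := ⟨n * ↑k * n⁻¹, hn.conj_mem _ k.2 n⟩
  map_one' := by ext; simp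
  map_mul' x y := by ext; push_cast; group

lemma conjHom_apply {G : Type u} [Group G] (K : Subgroup G) [K.Normal] (n : G) (k : ↥K) :
    (conjHom K n k : G) = n * ↑k * n⁻¹ := rfl

lemma conjHom_mul {G : Type u} [Group G] (K : Subgroup G) [K.Normal] (n m : G) (k : ↥K) :
    conjHom K (n * m) k = conjHom K n (conjHom K m k) := by
  ext; simp only [conjHom_apply]; group

lemma conjHom_continuous {G : Type u} [Group G] [TopologicalSpace G] [IsTopologicalGroup G]
    (K : Subgroup G) [K.Normal] (n : G) : Continuous (conjHom K n) := by
  apply Continuous.subtype_mk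
  exact (continuous_const.mul continuous_subtype_val).mul continuous_const

set_option maxHeartbeats 1000000 in
/-- a pro-2 group `N` which is an extension of `ℤ₂` by `ℤ₂` and has a closed
normal subgroup `K₁ ≅ ℤ₂` with `K₁ ∩ K = 1` is isomorphic to `ℤ₂ × ℤ₂` or to the
pro-2 Klein bottle. -/
theorem extension_is_abelian_or_klein
    (N : Type u) [Group N] [TopologicalSpace N] [IsTopologicalGroup N] (hN : IsProP 2 N)
    (K : Subgroup N) [K.Normal] (hKcl : IsClosed (K : Set N)) (hK : IsTopIsoZp 2 ↥K)
    (hQ : IsTopIsoZp 2 (N ⧸ K))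
    (K₁ : Subgroup N) (hK₁cl : IsClosed (K₁ : Set N)) (hK₁n : K₁.Normal)
    (hK₁ : IsTopIsoZp 2 ↥K₁) (hdisj : K₁ ⊓ K = ⊥) :
    IsTopIsoZpxZp 2 N ∨ IsProKleinBottle N := by
    classical
  obtain ⟨eK, heKc, heKc'⟩ := hK
  obtain ⟨eQ, heQc, heQc'⟩ := hQ
  obtain ⟨eK₁, heK₁c, heK₁c'⟩ := hK₁
  obtain ⟨hcomp, hT2, _hTD, _hIdx⟩ := hN
  haveI := hcomp
  haveI := hT2
  haveI : T2Space (Multiplicative ℤ_[2]) := inferInstanceAs (T2Space ℤ_[2])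
  haveI : CompactSpace (Multiplicative ℤ_[2]) := inferInstanceAs (CompactSpace ℤ_[2])
  -- the quotient map to Multiplicative ℤ₂
  set π : N →* Multiplicative ℤ_[2] := eQ.toMonoidHom.comp (QuotientGroup.mk' K) with hπ_def
  have hπc : Continuous π := heQc.comp QuotientGroup.continuous_mk
  have hπker : ∀ n : N, π n = 1 ↔ n ∈ K := by
    intro n
    simp only [hπ_def, MonoidHom.comp_apply, MulEquiv.coe_toMonoidHom]
    rw [EmbeddingLike.map_eq_one_iff]
    exact QuotientGroup.eq_one_iff n
  clear_value π
  -- generator of K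
  set a0 : ↥K := eK.symm (Multiplicative.ofAdd 1) with ha0_def
  set a : N := (a0 : N) with ha_def
  -- a lift t of the canonical topological generator of N/K
  obtain ⟨t, ht⟩ := QuotientGroup.mk'_surjective K (eQ.symm (Multiplicative.ofAdd 1))
  have hπt : π t = Multiplicative.ofAdd 1 := by
    simp only [hπ_def, MonoidHom.comp_apply, MulEquiv.coe_toMonoidHom, ht,
      MulEquiv.apply_symm_apply]
  set T : Subgroup N := topGenBy t with hT_def
  have hTcl : IsClosed (T : Set N) := Subgroup.isClosed_topologicalClosure _
  have hTcomp : IsCompact (T : Set N) := hTcl.isCompact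
  haveI : CompactSpace ↥T := isCompact_iff_compactSpace.mp hTcomp
  have htT : t ∈ T :=
    Subgroup.le_topologicalClosure _ (Subgroup.subset_closure (Set.mem_singleton t))
  -- closed sets containing all powers of t contain T
  have hTsub : ∀ S : Set N, IsClosed S → (∀ m : ℤ, t ^ m ∈ S) → (T : Set N) ⊆ S := by
    intro S hS hm
    have h1 : (Subgroup.closure {t} : Set N) ⊆ S := by
      rw [← Subgroup.zpowers_eq_closure]
      rintro x ⟨m, rfl⟩
      exact hm m
    have h2 : (T : Set N) = _root_.closure (Subgroup.closure {t} : Set N) :=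
      Subgroup.topologicalClosure_coe
    rw [h2]
    exact closure_minimal h1 hS
  -- π is surjective on T
  have hsurjT : ∀ y : Multiplicative ℤ_[2], ∃ x ∈ T, π x = y := by
    intro y
    have hScl : IsClosed (π '' (T : Set N)) := (hTcomp.image hπc).isClosed
    have hrange : Set.range (fun m : ℤ => (Multiplicative.ofAdd ((m : ℤ_[2])))) ⊆
        π '' (T : Set N) := by
      rintro _ ⟨m, rfl⟩
      exact ⟨t ^ m, T.zpow_mem htT m, by rw [map_zpow, hπt, ← aux_ofAdd_int]⟩
    have huniv : π '' (T : Set N) = Set.univ :=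
      hScl.closure_eq ▸ (aux_denseRange.mono hrange).closure_eq
    have hy : y ∈ π '' (T : Set N) := huniv ▸ Set.mem_univ y
    obtain ⟨x, hx, hxy⟩ := hy
    exact ⟨x, hx, hxy⟩
  -- decomposition N = K * T
  have hdecomp : ∀ n : N, ∃ k ∈ K, ∃ s ∈ T, n = k * s := by
    intro n
    obtain ⟨s, hs, hπs⟩ := hsurjT (π n)
    refine ⟨n * s⁻¹, ?_, s, hs, by group⟩
    rw [← hπker, map_mul, map_inv, hπs, mul_inv_cancel]
  have h2norm : ‖(2 : ℤ_[2])‖ = 2⁻¹ := by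
    have h := PadicInt.norm_p (p := 2)
    norm_num at h
    rw [h]
    norm_num
  have h2inj : ∀ u : ℤ_[2], u + u = 0 → u = 0 := by
    intro u hu
    have h1 : (2 : ℤ_[2]) * u = 0 := by linear_combination hu
    rcases mul_eq_zero.mp h1 with h | h
    · exact absurd h two_ne_zero
    · exact h
  -- square root extraction in T ∩ K
  have hsq_mem : ∀ f : N, f ∈ T → f ∈ K → ∃ x : N, x ∈ T ∧ x ∈ K ∧ x * x = f := by
    intro f hfT hfK
    set Sq : Set N := (fun x : N => x * x) '' (T : Set N) with hSq_def
    have hSqcl : IsClosed Sq := (hTcomp.image (continuous_id.mul continuous_id)).isClosed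
    have hEcl : IsClosed (Sq ∪ (fun y : N => t * y) '' Sq) :=
      hSqcl.union ((Homeomorph.mulLeft t).isClosedMap _ hSqcl)
    have hzE : ∀ m : ℤ, t ^ m ∈ Sq ∪ (fun y : N => t * y) '' Sq := by
      intro m
      rcases Int.even_or_odd m with ⟨r, hr⟩ | ⟨r, hr⟩
      · left
        refine ⟨t ^ r, T.zpow_mem htT r, ?_⟩
        show t ^ r * t ^ r = t ^ m
        rw [← zpow_add, ← hr]
      · right
        refine ⟨t ^ r * t ^ r, ⟨t ^ r, T.zpow_mem htT r, rfl⟩, ?_⟩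
        show t * (t ^ r * t ^ r) = t ^ m
        have : t ^ m = t ^ (1 + (r + r)) := by rw [hr]; congr 1; ring
        rw [this, zpow_add, zpow_add, zpow_one]
    rcases (hTsub _ hEcl hzE) hfT with ⟨x, hxT, hxx0⟩ | ⟨_, ⟨x, hxT, rfl⟩, hxf0⟩
    · have hxx : x * x = f := hxx0
      have hπf : π f = 1 := (hπker f).mpr hfK
      have h1 : π x * π x = 1 := by rw [← map_mul]; rw [hxx]; exact hπf
      have h2 : Multiplicative.toAdd (π x) + Multiplicative.toAdd (π x) = 0 := by
        have := congrArg Multiplicative.toAdd h1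
        simpa using this
      have h3 : π x = 1 := by
        have h4 := h2inj _ h2
        rw [← ofAdd_toAdd (π x), h4, ofAdd_zero]
      exact ⟨x, hxT, (hπker x).mp h3, hxx⟩
    · exfalso
      have hxf : t * (x * x) = f := hxf0
      have hπf : π (t * (x * x)) = 1 := by rw [hxf]; exact (hπker f).mpr hfK
      have h1 : (1 : ℤ_[2]) + (Multiplicative.toAdd (π x) + Multiplicative.toAdd (π x)) = 0 := by
        have := congrArg Multiplicative.toAdd hπf
        simpa [hπt] using this
      set u : ℤ_[2] := Multiplicative.toAdd (π x)
      have h2 : (1 : ℤ_[2]) = 2 * (-u) := by linear_combination h1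
      have h3 : (1 : ℝ) = ‖(2 : ℤ_[2]) * (-u)‖ := by rw [← h2, norm_one]
      rw [norm_mul, h2norm] at h3
      have h4 : ‖-u‖ ≤ 1 := by rw [norm_neg]; exact PadicInt.norm_le_one u
      nlinarith
  -- T ∩ K is trivial
  have hTK : ∀ f : N, f ∈ T → f ∈ K → f = 1 := by
    have key : ∀ m : ℕ, ∀ f : N, f ∈ T → ∀ hfK : f ∈ K,
        ‖Multiplicative.toAdd (eK ⟨f, hfK⟩)‖ ≤ (2 : ℝ)⁻¹ ^ m := by
      intro m
      induction m with
      | zero => intro f _ hfK; rw [pow_zero]; exact PadicInt.norm_le_one _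
      | succ m ih =>
        intro f hfT hfK
        obtain ⟨x, hxT, hxK, hxx⟩ := hsq_mem f hfT hfK
        have hfx : (⟨f, hfK⟩ : ↥K) = ⟨x, hxK⟩ * ⟨x, hxK⟩ := by
          ext; exact hxx.symm
        have heq : Multiplicative.toAdd (eK ⟨f, hfK⟩) =
            2 * Multiplicative.toAdd (eK ⟨x, hxK⟩) := by
          rw [hfx, map_mul]; simp [toAdd_mul]; ring
        rw [heq, norm_mul, h2norm]
        calc 2⁻¹ * ‖Multiplicative.toAdd (eK ⟨x, hxK⟩)‖ ≤ 2⁻¹ * (2 : ℝ)⁻¹ ^ m := by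
              have := ih x hxT hxK
              nlinarith
          _ = (2 : ℝ)⁻¹ ^ (m + 1) := by ring
    intro f hfT hfK
    have h0 : ‖Multiplicative.toAdd (eK ⟨f, hfK⟩)‖ = 0 := by
      have hle : ∀ m : ℕ, ‖Multiplicative.toAdd (eK ⟨f, hfK⟩)‖ ≤ (2 : ℝ)⁻¹ ^ m :=
        fun m => key m f hfT hfK
      have htend : Filter.Tendsto (fun m : ℕ => ((2 : ℝ)⁻¹) ^ m) Filter.atTop (nhds 0) :=
        tendsto_pow_atTop_nhds_zero_of_lt_one (by norm_num) (by norm_num)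
      exact le_antisymm (ge_of_tendsto' htend hle) (norm_nonneg _)
    have h1 : Multiplicative.toAdd (eK ⟨f, hfK⟩) = 0 := norm_eq_zero.mp h0
    have h2 : eK ⟨f, hfK⟩ = 1 := by
      rw [← ofAdd_toAdd (eK ⟨f, hfK⟩), h1, ofAdd_zero]
    have h3 : (⟨f, hfK⟩ : ↥K) = 1 := by
      apply eK.injective; rw [h2, map_one]
    exact congrArg Subtype.val h3
  -- the restriction of π to T is a topological isomorphism
  set πT : ↥T →* Multiplicative ℤ_[2] := π.comp T.subtype with hπT_def
  have hπTc : Continuous πT := hπc.comp continuous_subtype_val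
  have hπTinj : Function.Injective πT := by
    rw [injective_iff_map_eq_one]
    intro x hx
    exact Subtype.ext (hTK _ x.2 ((hπker _).mp hx))
  have hπTsurj : Function.Surjective πT := by
    intro y
    obtain ⟨x, hx, hxy⟩ := hsurjT y
    exact ⟨⟨x, hx⟩, hxy⟩
  set eT : ↥T ≃* Multiplicative ℤ_[2] := MulEquiv.ofBijective πT ⟨hπTinj, hπTsurj⟩
    with heT_def
  have heTc : Continuous eT := hπTc
  have heTc' : Continuous eT.symm :=
    (Continuous.homeoOfEquivCompactToT2 (f := eT.toEquiv) heTc).symm.continuous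
  have heTeq : ∀ x : ↥T, eT x = π ↑x := fun x => rfl
  clear_value eT
  have hIsoT : IsTopIsoZp 2 ↥T := ⟨eT, heTc, heTc'⟩
  -- the continuous section σ of π with image T
  set σ : Multiplicative ℤ_[2] →* N := T.subtype.comp eT.symm.toMonoidHom with hσ_def
  have hσc : Continuous σ := continuous_subtype_val.comp heTc'
  have hσmem : ∀ y, σ y ∈ T := fun y => (eT.symm y).2
  have hσval : ∀ y, σ y = ↑(eT.symm y) := fun y => rfl
  have hσπ : ∀ s : N, ∀ hs : s ∈ T, σ (π s) = s := by
    intro s hs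
    rw [hσval, ← heTeq ⟨s, hs⟩, eT.symm_apply_apply]
  have hπσ : ∀ y, π (σ y) = y := by
    intro y
    rw [hσval, ← heTeq (eT.symm y), eT.apply_symm_apply]
  clear_value σ
  have hσt : σ (Multiplicative.ofAdd 1) = t := by rw [← hπt]; exact hσπ t htT
  -- the conjugation cocycle c : N → ℤ₂
  set ψ : N → (Multiplicative ℤ_[2] →* Multiplicative ℤ_[2]) := fun n =>
    (eK.toMonoidHom.comp (conjHom K n)).comp eK.symm.toMonoidHom with hψ_def
  have hψc : ∀ n, Continuous (ψ n) :=
    fun n => heKc.comp ((conjHom_continuous K n).comp heKc')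
  set c : N → ℤ_[2] := fun n => Multiplicative.toAdd (ψ n (Multiplicative.ofAdd 1)) with hc_def
  have hψ_eq : ∀ n x, ψ n x = Multiplicative.ofAdd (Multiplicative.toAdd x * c n) := by
    intro n
    set g : Multiplicative ℤ_[2] →* Multiplicative ℤ_[2] :=
      { toFun := fun x => Multiplicative.ofAdd (Multiplicative.toAdd x * c n)
        map_one' := by simp
        map_mul' := by intro x y; simp [toAdd_mul, add_mul, ofAdd_add] } with hg_def
    have hgc : Continuous g := by
      have h0 : Continuous fun x : ℤ_[2] => x * c n := continuous_id.mul continuous_const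
      exact h0
    have h1 : ψ n (Multiplicative.ofAdd 1) = g (Multiplicative.ofAdd 1) := by
      simp only [hg_def, MonoidHom.coe_mk, OneHom.coe_mk, toAdd_ofAdd, one_mul]
      rw [hc_def, ofAdd_toAdd]
    exact aux_hom_ext (hψc n) hgc h1
  -- the conjugation formula
  have hconj : ∀ (n : N) (k : ↥K),
      n * ↑k * n⁻¹ = ↑(eK.symm (Multiplicative.ofAdd (Multiplicative.toAdd (eK k) * c n))) := by
    intro n k
    have h1 : conjHom K n k = eK.symm (ψ n (eK k)) := by
      simp only [hψ_def, MonoidHom.comp_apply, MulEquiv.coe_toMonoidHom,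
        MulEquiv.symm_apply_apply]
    rw [hψ_eq n (eK k)] at h1
    exact congrArg Subtype.val h1
  have hc_mul : ∀ n m : N, c (n * m) = c n * c m := by
    intro n m
    have h1 : ψ (n * m) (Multiplicative.ofAdd 1) = ψ n (ψ m (Multiplicative.ofAdd 1)) := by
      simp only [hψ_def, MonoidHom.comp_apply, MulEquiv.coe_toMonoidHom,
        MulEquiv.symm_apply_apply, conjHom_mul]
    rw [hc_def]
    simp only
    rw [h1, hψ_eq n (ψ m (Multiplicative.ofAdd 1)), hψ_eq m (Multiplicative.ofAdd 1)]
    simp [mul_comm, mul_assoc, mul_left_comm]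
    exact Or.inl rfl
  have hc_one : c 1 = 1 := by
    have h1 : conjHom K (1 : N) (eK.symm (Multiplicative.ofAdd 1)) =
        eK.symm (Multiplicative.ofAdd 1) := by
      ext; simp [conjHom_apply]
    rw [hc_def]
    simp only [hψ_def, MonoidHom.comp_apply, MulEquiv.coe_toMonoidHom, h1,
      MulEquiv.apply_symm_apply, toAdd_ofAdd]
  have hc_comm : ∀ n : N, (∀ k : ↥K, n * ↑k = ↑k * n) → c n = 1 := by
    intro n hcomm
    have h1 : conjHom K n (eK.symm (Multiplicative.ofAdd 1)) =
        eK.symm (Multiplicative.ofAdd 1) := by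
      ext
      rw [conjHom_apply]
      rw [hcomm (eK.symm (Multiplicative.ofAdd 1))]
      group
    rw [hc_def]
    simp only [hψ_def, MonoidHom.comp_apply, MulEquiv.coe_toMonoidHom, h1,
      MulEquiv.apply_symm_apply, toAdd_ofAdd]
  have hKab : ∀ x y : ↥K, x * y = y * x := fun x y =>
    eK.injective (by rw [map_mul, map_mul, mul_comm])
  have hc_K : ∀ k : N, k ∈ K → c k = 1 := by
    intro k hk
    apply hc_comm
    intro k'
    exact congrArg Subtype.val (hKab ⟨k, hk⟩ k')
  have hc_K1 : ∀ x : N, x ∈ K₁ → c x = 1 := by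
    intro x hx
    apply hc_comm
    intro k
    have hmem : x * ↑k * x⁻¹ * (↑k)⁻¹ ∈ K₁ ⊓ K := by
      constructor
      · have h1 : ↑k * x⁻¹ * (↑k)⁻¹ ∈ K₁ := hK₁n.conj_mem _ (K₁.inv_mem hx) ↑k
        have h2 : x * (↑k * x⁻¹ * (↑k)⁻¹) ∈ K₁ := K₁.mul_mem hx h1
        show x * ↑k * x⁻¹ * (↑k)⁻¹ ∈ K₁
        convert h2 using 1
        group
      · have h1 : x * ↑k * x⁻¹ ∈ K := Subgroup.Normal.conj_mem inferInstance _ k.2 x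
        exact K.mul_mem h1 (K.inv_mem k.2)
    rw [hdisj] at hmem
    have h3 : x * ↑k * x⁻¹ * (↑k)⁻¹ = 1 := hmem
    have h4 : x * ↑k * x⁻¹ * (↑k)⁻¹ * (↑k * x) = ↑k * x := by rw [h3, one_mul]
    calc x * ↑k = x * ↑k * x⁻¹ * (↑k)⁻¹ * (↑k * x) := by group
      _ = ↑k * x := h4
  have hc_cont : Continuous c := by
    have h1 : c = fun n => Multiplicative.toAdd (eK (⟨n * a * n⁻¹,
        Subgroup.Normal.conj_mem inferInstance _ a0.2 n⟩ : ↥K)) := by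
      funext n
      rw [hc_def]
      congr 1
    rw [h1]
    apply continuous_toAdd.comp
    apply heKc.comp
    apply Continuous.subtype_mk
    exact (continuous_id.mul continuous_const).mul continuous_inv
  have hc_pow : ∀ (x : N) (m : ℕ), c (x ^ m) = c x ^ m := by
    intro x m
    induction m with
    | zero => simpa using hc_one
    | succ m ih => rw [pow_succ, hc_mul, ih, pow_succ]
  clear_value ψ c
  -- the element of K₁ and the torsion argument
  set k10 : ↥K₁ := eK₁.symm (Multiplicative.ofAdd 1) with hk10_def
  have hk10 : (k10 : N) ≠ 1 := by
    intro h
    have h1 : k10 = 1 := Subtype.ext h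
    have h2 : (Multiplicative.ofAdd (1 : ℤ_[2])) = 1 := by
      rw [← eK₁.apply_symm_apply (Multiplicative.ofAdd 1), ← hk10_def, h1, map_one]
    have h3 : (1 : ℤ_[2]) = 0 := by
      have := congrArg Multiplicative.toAdd h2
      simpa using this
    exact one_ne_zero h3
  have hπk1 : π ↑k10 ≠ 1 := by
    intro h
    have hmem : (k10 : N) ∈ K₁ ⊓ K := ⟨k10.2, (hπker _).mp h⟩
    rw [hdisj] at hmem
    exact hk10 hmem
  obtain ⟨k, hk, s, hs, hks⟩ := hdecomp ↑k10
  have hcs : c s = 1 := by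
    have h1 : c ↑k10 = 1 := hc_K1 _ k10.2
    rw [hks, hc_mul, hc_K k hk, one_mul] at h1
    exact h1
  have hπs : π s = π ↑k10 := by
    rw [hks, map_mul, (hπker k).mpr hk, one_mul]
  set μ : ℤ_[2] := Multiplicative.toAdd (π ↑k10) with hμ_def
  have hμ0 : μ ≠ 0 := by
    intro h
    apply hπk1
    rw [← ofAdd_toAdd (π ↑k10), ← hμ_def, h, ofAdd_zero]
  set D : Set ℤ_[2] := {x | c (σ (Multiplicative.ofAdd x)) = 1} with hD_def
  have hDcl : IsClosed D :=
    isClosed_eq (hc_cont.comp (hσc.comp continuous_ofAdd)) continuous_const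
  set Dsub : AddSubgroup ℤ_[2] :=
    { carrier := D
      add_mem' := by
        intro x y hx hy
        show c (σ (Multiplicative.ofAdd (x + y))) = 1
        have h1 : Multiplicative.ofAdd (x + y) =
            Multiplicative.ofAdd x * Multiplicative.ofAdd y := rfl
        rw [h1, map_mul, hc_mul, hx, hy, one_mul]
      zero_mem' := by
        show c (σ (Multiplicative.ofAdd 0)) = 1
        rw [ofAdd_zero, map_one, hc_one]
      neg_mem' := by
        intro x hx
        show c (σ (Multiplicative.ofAdd (-x))) = 1
        have h1 : c (σ (Multiplicative.ofAdd (-x))) * c (σ (Multiplicative.ofAdd x)) = 1 := by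
          rw [← hc_mul, ← map_mul]
          have h2 : Multiplicative.ofAdd (-x) * Multiplicative.ofAdd x = 1 := by
            rw [← ofAdd_add]; rw [neg_add_cancel, ofAdd_zero]
          rw [h2, map_one, hc_one]
        have hx' : c (σ (Multiplicative.ofAdd x)) = 1 := hx
        rwa [hx', mul_one] at h1 } with hDsub_def
  have hmemD : ∀ x : ℤ_[2], x ∈ Dsub ↔ c (σ (Multiplicative.ofAdd x)) = 1 :=
    fun x => Iff.rfl
  clear_value Dsub
  have hDμ : μ ∈ Dsub := by
    rw [hmemD]
    have h1 : Multiplicative.ofAdd μ = π ↑k10 := ofAdd_toAdd _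
    rw [h1, ← hπs, hσπ s hs, hcs]
  have hDsmul : ∀ r : ℤ_[2], μ * r ∈ Dsub := by
    intro r
    have hcl : IsClosed {r : ℤ_[2] | μ * r ∈ Dsub} := by
      have h0 : {r : ℤ_[2] | μ * r ∈ Dsub} = (fun r : ℤ_[2] => μ * r) ⁻¹' D := by
        ext r
        simp only [Set.mem_setOf_eq, Set.mem_preimage, hmemD]
        exact Iff.rfl
      rw [h0]
      exact hDcl.preimage (continuous_const.mul continuous_id)
    have hint : Set.range (fun m : ℤ => ((m : ℤ_[2]))) ⊆ {r : ℤ_[2] | μ * r ∈ Dsub} := by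
      rintro _ ⟨m, rfl⟩
      show μ * (m : ℤ_[2]) ∈ Dsub
      have h1 : μ * (m : ℤ_[2]) = m • μ := by rw [zsmul_eq_mul]; ring
      rw [h1]
      exact AddSubgroup.zsmul_mem Dsub hDμ m
    have huniv : {r : ℤ_[2] | μ * r ∈ Dsub} = Set.univ :=
      hcl.closure_eq ▸ (PadicInt.denseRange_intCast.mono hint).closure_eq
    have : r ∈ {r : ℤ_[2] | μ * r ∈ Dsub} := huniv ▸ Set.mem_univ r
    exact this
  have h2pow : (2 : ℤ_[2]) ^ (μ.valuation) ∈ Dsub := by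
    have hspec := PadicInt.unitCoeff_spec hμ0
    push_cast at hspec
    have h2 : (PadicInt.unitCoeff hμ0 : ℤ_[2]) * ↑(PadicInt.unitCoeff hμ0)⁻¹ = 1 := by
      exact_mod_cast (PadicInt.unitCoeff hμ0).mul_inv
    have h1 : (2 : ℤ_[2]) ^ (μ.valuation) = μ * ↑(PadicInt.unitCoeff hμ0)⁻¹ := by
      linear_combination (-(2 : ℤ_[2]) ^ (μ.valuation)) * h2 -
        (↑(PadicInt.unitCoeff hμ0)⁻¹ : ℤ_[2]) * hspec
    rw [h1]
    exact hDsmul _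
  have hct_pow : (c t) ^ (2 ^ (μ.valuation)) = 1 := by
    have h3 : c (σ (Multiplicative.ofAdd ((2 : ℤ_[2]) ^ (μ.valuation)))) = 1 :=
      (hmemD _).mp h2pow
    have h4 : σ (Multiplicative.ofAdd ((2 : ℤ_[2]) ^ (μ.valuation))) =
        t ^ (2 ^ (μ.valuation) : ℕ) := by
      have h5 : ((2 : ℤ_[2]) ^ (μ.valuation)) =
          ((2 ^ (μ.valuation) : ℕ) : ℤ_[2]) := by push_cast; ring
      have h6 : ((2 ^ (μ.valuation) : ℕ) : ℤ_[2]) =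
          (2 ^ (μ.valuation) : ℕ) • (1 : ℤ_[2]) := by
        rw [nsmul_eq_mul, mul_one]
      rw [h5, h6, ofAdd_nsmul, map_pow, hσt]
    rw [h4, hc_pow] at h3
    exact h3
  rcases aux_torsion _ _ hct_pow with hct | hct
  · -- abelian case
    left
    have htK : ∀ k : ↥K, t * ↑k = ↑k * t := by
      intro k
      have h1 := hconj t k
      rw [hct, mul_one, ofAdd_toAdd, MulEquiv.symm_apply_apply] at h1
      calc t * ↑k = t * ↑k * t⁻¹ * t := by group
        _ = ↑k * t := by rw [h1]
    have hTKcomm : ∀ s' : N, s' ∈ T → ∀ k : ↥K, s' * ↑k = ↑k * s' := by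
      intro s' hs' k
      have hcl : IsClosed {n : N | n * ↑k = ↑k * n} :=
        isClosed_eq (continuous_id.mul continuous_const) (continuous_const.mul continuous_id)
      have hz : ∀ m : ℤ, t ^ m ∈ {n : N | n * ↑k = ↑k * n} := by
        intro m
        have hcomm : Commute t ↑k := htK k
        exact (hcomm.zpow_left m)
      exact hTsub _ hcl hz hs'
    set fK : Multiplicative ℤ_[2] →* N := K.subtype.comp eK.symm.toMonoidHom with hfK_def
    have hfKc : Continuous fK := continuous_subtype_val.comp heKc'
    have hfKmem : ∀ x, fK x ∈ K := fun x => (eK.symm x).2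
    have hfKval : ∀ x, fK x = ↑(eK.symm x) := fun x => rfl
    clear_value fK
    have hcomm : ∀ (x y : Multiplicative ℤ_[2]), Commute (fK x) (σ y) := by
      intro x y
      have h0 := (hTKcomm (σ y) (hσmem y) (eK.symm x)).symm
      rw [hfKval]
      exact h0
    set f : Multiplicative ℤ_[2] × Multiplicative ℤ_[2] →* N := fK.noncommCoprod σ hcomm
      with hf_def
    have hfapp : ∀ p : Multiplicative ℤ_[2] × Multiplicative ℤ_[2],
        f p = fK p.1 * σ p.2 := fun p => MonoidHom.noncommCoprod_apply fK σ hcomm p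
    clear_value f
    have hfc : Continuous f := by
      have h1 : (f : Multiplicative ℤ_[2] × Multiplicative ℤ_[2] → N) =
          fun p => fK p.1 * σ p.2 := funext hfapp
      rw [h1]
      exact (hfKc.comp continuous_fst).mul (hσc.comp continuous_snd)
    have hfinj : Function.Injective f := by
      rw [injective_iff_map_eq_one]
      rintro ⟨x, y⟩ hxy
      rw [hfapp] at hxy
      have h1 : fK x = (σ y)⁻¹ := eq_inv_of_mul_eq_one_left hxy
      have h2 : fK x ∈ T := h1 ▸ T.inv_mem (hσmem y)
      have h4 : fK x = 1 := hTK _ h2 (hfKmem x)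
      have hx1 : x = 1 := by
        have h5 : eK.symm x = 1 := Subtype.ext (by rw [← hfKval]; exact h4)
        rw [← eK.apply_symm_apply x, h5, map_one]
      have hy1 : y = 1 := by
        have h5 : σ y = 1 := by
          rw [h4, one_mul] at hxy
          exact hxy
        have h6 := hπσ y
        rw [h5, map_one] at h6
        exact h6.symm
      rw [hx1, hy1]
      rfl
    have hfsurj : Function.Surjective f := by
      intro n
      obtain ⟨k', hk', s', hs', rfl⟩ := hdecomp n
      refine ⟨(eK ⟨k', hk'⟩, π s'), ?_⟩
      rw [hfapp]
      have h1 : fK (eK ⟨k', hk'⟩) = k' := by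
        rw [hfKval, MulEquiv.symm_apply_apply]
      rw [h1, hσπ s' hs']
    set e0 := MulEquiv.ofBijective f ⟨hfinj, hfsurj⟩ with he0_def
    have he0c : Continuous e0 := hfc
    clear_value e0
    refine ⟨e0.symm,
      (Continuous.homeoOfEquivCompactToT2 (f := e0.toEquiv) he0c).symm.continuous, ?_⟩
    rw [MulEquiv.symm_symm]
    exact he0c
  · -- Klein bottle case
    right
    have hKa : topGenBy a = K := by
      apply le_antisymm
      · apply Subgroup.topologicalClosure_minimal
        · rw [Subgroup.closure_le]
          intro x hx
          rw [Set.mem_singleton_iff] at hx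
          rw [hx]
          exact a0.2
        · exact hKcl
      · intro x hx
        have hclosed : IsClosed ((topGenBy a : Subgroup N) : Set N) :=
          Subgroup.isClosed_topologicalClosure _
        have hgc : Continuous (fun y : Multiplicative ℤ_[2] => (↑(eK.symm y) : N)) :=
          continuous_subtype_val.comp heKc'
        have hU : IsClosed ((fun y : Multiplicative ℤ_[2] => (↑(eK.symm y) : N)) ⁻¹'
            (topGenBy a : Set N)) := hclosed.preimage hgc
        have haA : a ∈ topGenBy a :=
          Subgroup.le_topologicalClosure _ (Subgroup.subset_closure (Set.mem_singleton a))
        have hsub : Set.range (fun m : ℤ => (Multiplicative.ofAdd ((m : ℤ_[2])))) ⊆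
            (fun y : Multiplicative ℤ_[2] => (↑(eK.symm y) : N)) ⁻¹'
              (topGenBy a : Set N) := by
          rintro _ ⟨m, rfl⟩
          show (↑(eK.symm (Multiplicative.ofAdd ((m : ℤ_[2])))) : N) ∈ topGenBy a
          rw [aux_ofAdd_int, map_zpow]
          have h1 : (↑(a0 ^ m) : N) = a ^ m := by
            push_cast
            rfl
          rw [← ha0_def, h1]
          exact Subgroup.zpow_mem _ haA m
        have huniv : (fun y : Multiplicative ℤ_[2] => (↑(eK.symm y) : N)) ⁻¹'
            (topGenBy a : Set N) = Set.univ :=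
          hU.closure_eq ▸ (aux_denseRange.mono hsub).closure_eq
        have h2 : (↑(eK.symm (eK ⟨x, hx⟩)) : N) ∈ (topGenBy a : Set N) := by
          have := huniv ▸ Set.mem_univ (eK ⟨x, hx⟩)
          exact this
        rwa [MulEquiv.symm_apply_apply] at h2
    refine ⟨a, t, ?_, ?_, ?_, ?_, ?_, ?_⟩
    · -- t⁻¹ * a * t = a⁻¹
      have hct' : c t⁻¹ = -1 := by
        have h1 : c t * c t⁻¹ = 1 := by
          rw [← hc_mul, mul_inv_cancel, hc_one]
        rw [hct] at h1
        linear_combination -h1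
      have h1 := hconj t⁻¹ a0
      rw [hct', inv_inv] at h1
      have h2 : Multiplicative.toAdd (eK a0) = 1 := by
        rw [ha0_def, MulEquiv.apply_symm_apply, toAdd_ofAdd]
      rw [h2, one_mul] at h1
      have h3 : eK.symm (Multiplicative.ofAdd (-1 : ℤ_[2])) = a0⁻¹ := by
        have h4 : (Multiplicative.ofAdd (-1 : ℤ_[2])) = (Multiplicative.ofAdd (1 : ℤ_[2]))⁻¹ :=
          ofAdd_neg 1
        rw [h4, map_inv, ← ha0_def]
      rw [h3] at h1
      simpa using h1
    · exact hKa ▸ (inferInstance : K.Normal)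
    · exact hKa ▸ (⟨eK, heKc, heKc'⟩ : IsTopIsoZp 2 ↥K)
    · exact hIsoT
    · rw [hKa, ← hT_def, eq_bot_iff]
      rintro x ⟨hxK, hxT⟩
      have := hTK x hxT hxK
      simpa [Subgroup.mem_bot] using this
    · rw [hKa, ← hT_def]
      have hsup : K ⊔ T = ⊤ := by
        rw [eq_top_iff]
        intro n _
        obtain ⟨k', hk', s', hs', rfl⟩ := hdecomp n
        exact Subgroup.mul_mem _ (Subgroup.mem_sup_left hk') (Subgroup.mem_sup_right hs')
      rw [hsup]
      exact eq_top_iff.mpr (Subgroup.le_topologicalClosure ⊤)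
end
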